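/- arXiv:1311.4478 — 4 statements merged into one kernel-verified Lean document; each statement's English description precedes it below -/
import Mathlib

section
/- Let K be an ultrametric field and λ ∈ K with |λ| = 1. Let f(z) = λz + ... be a power series in O_K[[z]] with zero constant term and linear coefficient λ. If r ≥ 1 is an integer such that |λ^r − 1| = 1, then f has no periodic point of period r in m_K other than z = 0; that is, for every z₀ ∈ m_K \ {0} we have f^r(z₀) ≠ z₀. -/
open PowerSeries

/-- Formal composition `f ∘ g` of power series (correct when `g` has zero constant term). -/
noncomputable def fcomp {K : Type*} [CommRing K] (f g : PowerSeries K) : PowerSeries K :=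
  PowerSeries.mk fun n =>
    ∑ m ∈ Finset.range (n + 1), (PowerSeries.coeff m f) * (PowerSeries.coeff n (g ^ m))

/-- `m`-th iterate of a power series with zero constant term. -/
noncomputable def fit {K : Type*} [CommRing K] (g : PowerSeries K) : ℕ → PowerSeries K
  | 0 => PowerSeries.X
  | n + 1 => fcomp g (fit g n)

section aux

variable {K : Type*} [NontriviallyNormedField K] [IsUltrametricDist K]

lemma coeff_mul_norm_le {a b : PowerSeries K} (ha : ∀ n, ‖PowerSeries.coeff n a‖ ≤ 1)
    (hb : ∀ n, ‖PowerSeries.coeff n b‖ ≤ 1) (n : ℕ) : ‖PowerSeries.coeff n (a * b)‖ ≤ 1 := by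
  rw [PowerSeries.coeff_mul]
  refine IsUltrametricDist.norm_sum_le_of_forall_le_of_nonneg zero_le_one fun p _ => ?_
  calc ‖PowerSeries.coeff p.1 a * PowerSeries.coeff p.2 b‖
      = ‖PowerSeries.coeff p.1 a‖ * ‖PowerSeries.coeff p.2 b‖ := norm_mul _ _
    _ ≤ 1 * 1 := mul_le_mul (ha _) (hb _) (norm_nonneg _) zero_le_one
    _ = 1 := one_mul 1

lemma coeff_pow_norm_le {a : PowerSeries K} (ha : ∀ n, ‖PowerSeries.coeff n a‖ ≤ 1)
    (m n : ℕ) : ‖PowerSeries.coeff n (a ^ m)‖ ≤ 1 := by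
  induction m generalizing n with
  | zero =>
    rw [pow_zero, PowerSeries.coeff_one]
    split <;> simp
  | succ m ih =>
    rw [pow_succ]
    exact coeff_mul_norm_le ih ha n

lemma fcomp_coeff_norm_le {f g : PowerSeries K} (hf : ∀ n, ‖PowerSeries.coeff n f‖ ≤ 1)
    (hg : ∀ n, ‖PowerSeries.coeff n g‖ ≤ 1) (n : ℕ) :
    ‖PowerSeries.coeff n (fcomp f g)‖ ≤ 1 := by
  rw [fcomp, PowerSeries.coeff_mk]
  refine IsUltrametricDist.norm_sum_le_of_forall_le_of_nonneg zero_le_one fun m _ => ?_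
  calc ‖PowerSeries.coeff m f * PowerSeries.coeff n (g ^ m)‖
      = ‖PowerSeries.coeff m f‖ * ‖PowerSeries.coeff n (g ^ m)‖ := norm_mul _ _
    _ ≤ 1 * 1 := mul_le_mul (hf _) (coeff_pow_norm_le hg m n) (norm_nonneg _) zero_le_one
    _ = 1 := one_mul 1

lemma fit_coeff_norm_le {f : PowerSeries K} (hf : ∀ n, ‖PowerSeries.coeff n f‖ ≤ 1)
    (r n : ℕ) : ‖PowerSeries.coeff n (fit f r)‖ ≤ 1 := by
  induction r generalizing n with
  | zero =>
    simp only [fit, PowerSeries.coeff_X]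
    split <;> simp
  | succ r ih => exact fcomp_coeff_norm_le hf ih n

end aux

section aux2

variable {K : Type*} [CommRing K]

lemma fcomp_coeff_zero (f g : PowerSeries K) (hf0 : PowerSeries.constantCoeff f = 0) :
    PowerSeries.coeff 0 (fcomp f g) = 0 := by
  rw [fcomp, PowerSeries.coeff_mk]
  simp [PowerSeries.coeff_zero_eq_constantCoeff, hf0]

lemma fit_coeff_zero (f : PowerSeries K) (hf0 : PowerSeries.constantCoeff f = 0) (r : ℕ) :
    PowerSeries.coeff 0 (fit f r) = 0 := by
  cases r with
  | zero => simp [fit]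
  | succ r => exact fcomp_coeff_zero f _ hf0

lemma fit_coeff_one (f : PowerSeries K) (hf0 : PowerSeries.constantCoeff f = 0)
    (lam : K) (hf1 : PowerSeries.coeff 1 f = lam) (r : ℕ) :
    PowerSeries.coeff 1 (fit f r) = lam ^ r := by
  induction r with
  | zero => simp [fit]
  | succ r ih =>
    show PowerSeries.coeff 1 (fcomp f (fit f r)) = lam ^ (r + 1)
    rw [fcomp, PowerSeries.coeff_mk, Finset.sum_range_succ, Finset.sum_range_one]
    simp only [pow_zero, pow_one, PowerSeries.coeff_one]
    rw [← PowerSeries.coeff_zero_eq_constantCoeff] at hf0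
    simp [hf0, hf1, ih, pow_succ, mul_comm]

end aux2

/-- Let `K` be an ultrametric field, `λ ∈ K` with `‖λ‖ = 1`, and `f(z) = λz + ⋯` a power
series in `O_K[[z]]`.  If `r ≥ 1` satisfies `‖λ^r - 1‖ = 1`, then `f` has no periodic point
of period `r` in `m_K ∖ {0}`: for `z₀ ∈ m_K`, `z₀ ≠ 0`, the evaluation of `f^r` at `z₀`
does not converge to `z₀`. -/
theorem stmt2 {K : Type*} [NontriviallyNormedField K] [IsUltrametricDist K]
    (lam : K) (hlam : ‖lam‖ = 1)
    (f : PowerSeries K) (hf : ∀ n, ‖PowerSeries.coeff n f‖ ≤ 1)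
    (hf0 : PowerSeries.constantCoeff f = 0) (hf1 : PowerSeries.coeff 1 f = lam)
    (r : ℕ) (hr : 1 ≤ r) (hlr : ‖lam ^ r - 1‖ = 1)
    (z₀ : K) (hz : ‖z₀‖ < 1) (hz0 : z₀ ≠ 0) :
    ¬ HasSum (fun n : ℕ => (PowerSeries.coeff n (fit f r)) * z₀ ^ n) z₀ := by
  intro h
  set c : ℕ → K := fun n => PowerSeries.coeff n (fit f r) with hc
  have hc0 : c 0 = 0 := fit_coeff_zero f hf0 r
  have hc1 : c 1 = lam ^ r := fit_coeff_one f hf0 lam hf1 r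
  have hcb : ∀ n, ‖c n‖ ≤ 1 := fit_coeff_norm_le hf r
  -- tail sum
  have htail : HasSum (fun n : ℕ => c (n + 2) * z₀ ^ (n + 2))
      (z₀ - ∑ i ∈ Finset.range 2, c i * z₀ ^ i) :=
    ((hasSum_nat_add_iff' 2).mpr h)
  have hsum2 : ∑ i ∈ Finset.range 2, c i * z₀ ^ i = lam ^ r * z₀ := by
    rw [Finset.sum_range_succ, Finset.sum_range_one, hc0, hc1]
    ring
  rw [hsum2] at htail
  -- every term of the tail has norm ≤ ‖z₀‖^2
  have hterm : ∀ n : ℕ, ‖c (n + 2) * z₀ ^ (n + 2)‖ ≤ ‖z₀‖ ^ 2 := by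
    intro n
    rw [norm_mul, norm_pow]
    calc ‖c (n + 2)‖ * ‖z₀‖ ^ (n + 2)
        ≤ 1 * ‖z₀‖ ^ (n + 2) := by
          exact mul_le_mul_of_nonneg_right (hcb _) (pow_nonneg (norm_nonneg _) _)
      _ = ‖z₀‖ ^ (n + 2) := one_mul _
      _ ≤ ‖z₀‖ ^ 2 := pow_le_pow_of_le_one (norm_nonneg _) hz.le (by omega)
  -- hence the sum has norm ≤ ‖z₀‖^2
  have hlim : ‖z₀ - lam ^ r * z₀‖ ≤ ‖z₀‖ ^ 2 := by
    have := htail.tendsto_sum_nat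
    refine le_of_tendsto (this.norm) (Filter.Eventually.of_forall fun N => ?_)
    exact IsUltrametricDist.norm_sum_le_of_forall_le_of_nonneg
      (pow_nonneg (norm_nonneg _) _) (fun i _ => hterm i)
  -- but ‖z₀ - lam^r z₀‖ = ‖z₀‖
  have heq : ‖z₀ - lam ^ r * z₀‖ = ‖z₀‖ := by
    have : z₀ - lam ^ r * z₀ = -((lam ^ r - 1) * z₀) := by ring
    rw [this, norm_neg, norm_mul, hlr, one_mul]
  rw [heq] at hlim
  have hpos : 0 < ‖z₀‖ := norm_pos_iff.mpr hz0
  nlinarith [hlim, hpos, hz]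
end

section
/- Let K be an ultrametric field of positive residue characteristic p, let λ ∈ K with |λ| = 1, and suppose the reduction of λ has finite order q in the multiplicative group of the residue field. Then p does not divide q, and for every power series f(z) = λz + ... in O_K[[z]], the minimal period of every periodic point of f in m_K \ {0} is of the form q·p^n for some integer n ≥ 0. -/
set_option linter.unusedSectionVars false
set_option linter.unusedVariables false
set_option linter.unnecessarySimpa false
set_option maxHeartbeats 1000000

open PowerSeries

namespace Stmt3Aux

open Filter Topology Finset

variable {K : Type*} [NontriviallyNormedField K] [IsUltrametricDist K] [CompleteSpace K]

lemma summable_of_norm_le_pow {z : K} (hz : ‖z‖ < 1) {g : ℕ → K}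
    (hg : ∀ n, ‖g n‖ ≤ ‖z‖ ^ n) : Summable g := by
  apply NonarchimedeanAddGroup.summable_of_tendsto_cofinite_zero
  rw [Nat.cofinite_eq_atTop]
  exact squeeze_zero_norm hg (tendsto_pow_atTop_nhds_zero_of_lt_one (norm_nonneg z) hz)

lemma summable_prod_of_norm_le_pow {z : K} (hz : ‖z‖ < 1) {g : ℕ × ℕ → K}
    (hg : ∀ x : ℕ × ℕ, ‖g x‖ ≤ ‖z‖ ^ max x.1 x.2) : Summable g := by
  apply NonarchimedeanAddGroup.summable_of_tendsto_cofinite_zero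
  rw [Metric.tendsto_nhds]
  intro ε hε
  obtain ⟨N, hN⟩ := exists_pow_lt_of_lt_one hε hz
  rw [Filter.eventually_cofinite]
  apply Set.Finite.subset ((Set.finite_Iio N).prod (Set.finite_Iio N))
  rintro ⟨i, j⟩ hx
  simp only [Set.mem_setOf_eq, dist_zero_right, not_lt] at hx
  by_contra hmem
  simp only [Set.mem_prod, Set.mem_Iio, not_and_or, not_lt] at hmem
  have hmax : N ≤ max i j := by
    rcases hmem with h | h
    · exact le_max_of_le_left h
    · exact le_max_of_le_right h
  have h1 : ‖g (i, j)‖ ≤ ‖z‖ ^ max i j := hg _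
  have h2 : ‖z‖ ^ max i j ≤ ‖z‖ ^ N := pow_le_pow_of_le_one (norm_nonneg z) hz.le hmax
  linarith

lemma norm_hasSum_le {ι : Type*} {g : ι → K} {a : K} {C : ℝ} (hC : 0 ≤ C) (h : HasSum g a)
    (hg : ∀ i, ‖g i‖ ≤ C) : ‖a‖ ≤ C := by
  refine le_of_tendsto ((continuous_norm.tendsto a).comp h)
    (Filter.Eventually.of_forall fun s => ?_)
  exact IsUltrametricDist.norm_sum_le_of_forall_le_of_nonneg hC fun i _ => hg i

/-- Evaluation of a power series. -/
noncomputable def ev (g : PowerSeries K) (z : K) : K := ∑' n, PowerSeries.coeff n g * z ^ n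

def Bdd (g : PowerSeries K) : Prop := ∀ n, ‖PowerSeries.coeff n g‖ ≤ 1

lemma Bdd.mul {A B : PowerSeries K} (hA : Bdd A) (hB : Bdd B) : Bdd (A * B) := by
  intro n
  rw [PowerSeries.coeff_mul]
  apply IsUltrametricDist.norm_sum_le_of_forall_le_of_nonneg zero_le_one
  rintro ⟨i, j⟩ -
  rw [norm_mul]
  exact mul_le_one₀ (hA i) (norm_nonneg _) (hB j)

lemma Bdd.pow {A : PowerSeries K} (hA : Bdd A) : ∀ m, Bdd (A ^ m)
  | 0 => by
    intro n
    rw [pow_zero, PowerSeries.coeff_one]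
    split_ifs <;> simp
  | m + 1 => by
    rw [pow_succ]
    exact (hA.pow m).mul hA

lemma Bdd.fcomp {A B : PowerSeries K} (hA : Bdd A) (hB : Bdd B) : Bdd (_root_.fcomp A B) := by
  intro n
  rw [_root_.fcomp, PowerSeries.coeff_mk]
  apply IsUltrametricDist.norm_sum_le_of_forall_le_of_nonneg zero_le_one
  intro m _
  rw [norm_mul]
  exact mul_le_one₀ (hA m) (norm_nonneg _) (hB.pow m n)

lemma coeff_pow_eq_zero {B : PowerSeries K} (hB : PowerSeries.constantCoeff B = 0)
    {m n : ℕ} (h : n < m) : PowerSeries.coeff n (B ^ m) = 0 := by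
  have hdvd : (PowerSeries.X : PowerSeries K) ^ m ∣ B ^ m :=
    pow_dvd_pow_of_dvd (PowerSeries.X_dvd_iff.mpr hB) m
  exact PowerSeries.X_pow_dvd_iff.mp hdvd n h

lemma constantCoeff_fcomp {A B : PowerSeries K} (hA : PowerSeries.constantCoeff A = 0) :
    PowerSeries.constantCoeff (_root_.fcomp A B) = 0 := by
  rw [← PowerSeries.coeff_zero_eq_constantCoeff_apply, _root_.fcomp, PowerSeries.coeff_mk,
    Finset.sum_range_one, PowerSeries.coeff_zero_eq_constantCoeff_apply, hA, zero_mul]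

lemma bdd_fit {f : PowerSeries K} (hf : Bdd f) : ∀ m, Bdd (fit f m)
  | 0 => by
    intro n
    rw [fit, PowerSeries.coeff_X]
    split_ifs <;> simp
  | m + 1 => by
    rw [fit]
    exact hf.fcomp (bdd_fit hf m)

lemma constantCoeff_fit {f : PowerSeries K} (hf : PowerSeries.constantCoeff f = 0) :
    ∀ m, PowerSeries.constantCoeff (fit f m) = 0
  | 0 => by rw [fit]; exact PowerSeries.constantCoeff_X
  | m + 1 => by rw [fit]; exact constantCoeff_fcomp hf


lemma hasSum_ev {A : PowerSeries K} (hA : Bdd A) {z : K} (hz : ‖z‖ < 1) :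
    HasSum (fun n => PowerSeries.coeff n A * z ^ n) (ev A z) := by
  refine (summable_of_norm_le_pow hz fun n => ?_).hasSum
  rw [norm_mul, norm_pow]
  exact mul_le_of_le_one_left (pow_nonneg (norm_nonneg z) n) (hA n)

lemma ev_norm_le {A : PowerSeries K} (hA : Bdd A) (h0 : PowerSeries.constantCoeff A = 0)
    {z : K} (hz : ‖z‖ < 1) : ‖ev A z‖ ≤ ‖z‖ := by
  refine norm_hasSum_le (norm_nonneg z) (hasSum_ev hA hz) fun n => ?_
  match n with
  | 0 => simp [h0]
  | n + 1 =>
    rw [norm_mul, norm_pow]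
    calc ‖PowerSeries.coeff (n+1) A‖ * ‖z‖ ^ (n + 1)
        ≤ 1 * ‖z‖ ^ (n + 1) :=
          mul_le_mul_of_nonneg_right (hA _) (pow_nonneg (norm_nonneg z) _)
      _ = ‖z‖ ^ (n + 1) := one_mul _
      _ ≤ ‖z‖ := pow_le_of_le_one (norm_nonneg z) hz.le (Nat.succ_ne_zero n)

lemma ev_mul {A B : PowerSeries K} (hA : Bdd A) (hB : Bdd B) {z : K} (hz : ‖z‖ < 1) :
    ev (A * B) z = ev A z * ev B z := by
  have hA' := hasSum_ev hA hz
  have hB' := hasSum_ev hB hz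
  have hprod : Summable (fun x : ℕ × ℕ =>
      (PowerSeries.coeff x.1 A * z ^ x.1) * (PowerSeries.coeff x.2 B * z ^ x.2)) := by
    apply summable_prod_of_norm_le_pow hz
    rintro ⟨i, j⟩
    simp only [norm_mul, norm_pow]
    calc ‖PowerSeries.coeff i A‖ * ‖z‖ ^ i * (‖PowerSeries.coeff j B‖ * ‖z‖ ^ j)
        ≤ 1 * ‖z‖ ^ i * (1 * ‖z‖ ^ j) := by
          apply mul_le_mul
          · exact mul_le_mul_of_nonneg_right (hA i) (pow_nonneg (norm_nonneg z) i)
          · exact mul_le_mul_of_nonneg_right (hB j) (pow_nonneg (norm_nonneg z) j)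
          · positivity
          · positivity
      _ = ‖z‖ ^ (i + j) := by rw [one_mul, one_mul, pow_add]
      _ ≤ ‖z‖ ^ max i j := pow_le_pow_of_le_one (norm_nonneg z) hz.le
            (max_le (Nat.le_add_right i j) (Nat.le_add_left j i))
  unfold ev
  rw [Summable.tsum_mul_tsum_eq_tsum_sum_antidiagonal hA'.summable hB'.summable hprod]
  congr 1
  funext n
  rw [PowerSeries.coeff_mul, Finset.sum_mul]
  refine Finset.sum_congr rfl fun kl hkl => ?_
  have h := Finset.HasAntidiagonal.mem_antidiagonal.mp hkl
  rw [← h, pow_add]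
  ring

lemma ev_one {z : K} : ev (1 : PowerSeries K) z = 1 := by
  unfold ev
  rw [tsum_eq_single 0 (fun n hn => by rw [PowerSeries.coeff_one, if_neg hn, zero_mul])]
  simp

lemma ev_X {z : K} : ev (PowerSeries.X : PowerSeries K) z = z := by
  unfold ev
  rw [tsum_eq_single 1 (fun n hn => by rw [PowerSeries.coeff_X, if_neg hn, zero_mul])]
  simp

lemma ev_pow {A : PowerSeries K} (hA : Bdd A) {z : K} (hz : ‖z‖ < 1) :
    ∀ m, ev (A ^ m) z = (ev A z) ^ m
  | 0 => by rw [pow_zero, pow_zero, ev_one]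
  | m + 1 => by rw [pow_succ, pow_succ, ev_mul (hA.pow m) hA hz, ev_pow hA hz m]

lemma ev_fcomp {A B : PowerSeries K} (hA : Bdd A) (hB : Bdd B)
    (hB0 : PowerSeries.constantCoeff B = 0) {z : K} (hz : ‖z‖ < 1) :
    ev (fcomp A B) z = ev A (ev B z) := by
  set c : ℕ → ℕ → K := fun m n =>
    PowerSeries.coeff m A * (PowerSeries.coeff n (B ^ m) * z ^ n) with hc
  have hsum : Summable (Function.uncurry c) := by
    apply summable_prod_of_norm_le_pow hz
    rintro ⟨m, n⟩
    rcases lt_or_ge n m with h | h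
    · simp only [Function.uncurry, hc, coeff_pow_eq_zero hB0 h, zero_mul, mul_zero, norm_zero]
      positivity
    · rw [max_eq_right h]
      simp only [Function.uncurry, hc, norm_mul, norm_pow]
      calc ‖PowerSeries.coeff m A‖ * (‖PowerSeries.coeff n (B ^ m)‖ * ‖z‖ ^ n)
          ≤ 1 * (1 * ‖z‖ ^ n) := by
            apply mul_le_mul (hA m) _ (by positivity) zero_le_one
            exact mul_le_mul_of_nonneg_right (hB.pow m n) (pow_nonneg (norm_nonneg z) n)
        _ = ‖z‖ ^ n := by ring
  have key : ∀ n, ∑' m, c m n = PowerSeries.coeff n (fcomp A B) * z ^ n := by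
    intro n
    rw [tsum_eq_sum (s := Finset.range (n + 1))
      (fun m hm => by
        have h : n < m := by simpa using Nat.lt_of_succ_le (Nat.not_lt.mp (by simpa using hm))
        simp [hc, coeff_pow_eq_zero hB0 h])]
    rw [fcomp, PowerSeries.coeff_mk, Finset.sum_mul]
    exact Finset.sum_congr rfl fun m _ => by rw [hc]; ring
  have h2 : ev A (ev B z) = ∑' m, ∑' n, c m n := by
    unfold ev
    congr 1
    funext m
    rw [show (∑' n, PowerSeries.coeff n B * z ^ n) = ev B z from rfl, ← ev_pow hB hz m,
      ev, ← tsum_mul_left]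
  have h3 : ev (fcomp A B) z = ∑' n, ∑' m, c m n := by
    unfold ev
    exact tsum_congr fun n => (key n).symm
  rw [h3, h2]
  exact Summable.tsum_comm hsum

lemma ev_zero {A : PowerSeries K} (h0 : PowerSeries.constantCoeff A = 0) : ev A 0 = 0 := by
  unfold ev
  rw [tsum_eq_single 0 (fun n hn => by rw [zero_pow hn, mul_zero])]
  simpa using h0

lemma pow_sub_pow_norm_le {x y : K} {ρ : ℝ} (hx : ‖x‖ ≤ ρ) (hy : ‖y‖ ≤ ρ) :
    ∀ n, ‖x ^ (n + 1) - y ^ (n + 1)‖ ≤ ρ ^ n * ‖x - y‖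
  | 0 => by simp
  | n + 1 => by
    have h := pow_sub_pow_norm_le hx hy n
    have hρ0 : 0 ≤ ρ := le_trans (norm_nonneg x) hx
    have hid : x ^ (n + 2) - y ^ (n + 2) =
        x * (x ^ (n + 1) - y ^ (n + 1)) + (x - y) * y ^ (n + 1) := by ring
    rw [hid]
    refine le_trans (IsUltrametricDist.norm_add_le_max _ _) (max_le ?_ ?_)
    · rw [norm_mul]
      calc ‖x‖ * ‖x ^ (n + 1) - y ^ (n + 1)‖ ≤ ρ * (ρ ^ n * ‖x - y‖) :=
            mul_le_mul hx h (norm_nonneg _) hρ0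
        _ = ρ ^ (n + 1) * ‖x - y‖ := by ring
    · rw [norm_mul, norm_pow]
      calc ‖x - y‖ * ‖y‖ ^ (n + 1) ≤ ‖x - y‖ * ρ ^ (n + 1) :=
            mul_le_mul_of_nonneg_left (pow_le_pow_left₀ (norm_nonneg _) hy _) (norm_nonneg _)
        _ = ρ ^ (n + 1) * ‖x - y‖ := mul_comm _ _

lemma ev_sub_lin {f : PowerSeries K} (hf : Bdd f) (hf0 : PowerSeries.constantCoeff f = 0)
    {lam : K} (hf1 : PowerSeries.coeff 1 f = lam) {ρ : ℝ} (hρ1 : ρ < 1)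
    {x y : K} (hx : ‖x‖ ≤ ρ) (hy : ‖y‖ ≤ ρ) :
    ‖ev f x - ev f y - lam * (x - y)‖ ≤ ρ * ‖x - y‖ := by
  have hρ0 : 0 ≤ ρ := le_trans (norm_nonneg x) hx
  have hx1 : ‖x‖ < 1 := lt_of_le_of_lt hx hρ1
  have hy1 : ‖y‖ < 1 := lt_of_le_of_lt hy hρ1
  have hS1 : HasSum (fun n : ℕ => if n = 1 then lam * (x - y) else 0) (lam * (x - y)) :=
    hasSum_ite_eq 1 _
  have hS := ((hasSum_ev hf hx1).sub (hasSum_ev hf hy1)).sub hS1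
  refine norm_hasSum_le (mul_nonneg hρ0 (norm_nonneg _)) hS fun n => ?_
  match n with
  | 0 => 
    simp only [if_neg (by norm_num : (0:ℕ) ≠ 1), sub_zero, pow_zero, mul_one, sub_self, norm_zero]
    positivity
  | 1 =>
    rw [if_pos rfl, hf1, pow_one, pow_one,
      show lam * x - lam * y - lam * (x - y) = 0 from by ring, norm_zero]
    positivity
  | (n + 2) =>
    rw [if_neg (by omega), sub_zero, ← mul_sub, norm_mul]
    calc ‖PowerSeries.coeff (n + 2) f‖ * ‖x ^ (n + 2) - y ^ (n + 2)‖
        ≤ 1 * (ρ ^ (n + 1) * ‖x - y‖) :=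
          mul_le_mul (hf _) (pow_sub_pow_norm_le hx hy (n + 1)) (norm_nonneg _) zero_le_one
      _ = ρ ^ (n + 1) * ‖x - y‖ := one_mul _
      _ ≤ ρ * ‖x - y‖ := mul_le_mul_of_nonneg_right
            (pow_le_of_le_one hρ0 hρ1.le (Nat.succ_ne_zero n)) (norm_nonneg _)

lemma iter_norm_le {f : PowerSeries K} (hf : Bdd f) (hf0 : PowerSeries.constantCoeff f = 0)
    {ρ : ℝ} (hρ1 : ρ < 1) : ∀ (k : ℕ) (x : K), ‖x‖ ≤ ρ → ‖(fun t => ev f t)^[k] x‖ ≤ ρ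
  | 0, x, hx => hx
  | k + 1, x, hx => by
    rw [Function.iterate_succ_apply']
    have h := iter_norm_le hf hf0 hρ1 k x hx
    exact le_trans (ev_norm_le hf hf0 (lt_of_le_of_lt h hρ1)) h

lemma iter_lin {f : PowerSeries K} (hf : Bdd f) (hf0 : PowerSeries.constantCoeff f = 0)
    {lam : K} (hf1 : PowerSeries.coeff 1 f = lam) (hlam : ‖lam‖ = 1)
    {ρ : ℝ} (hρ1 : ρ < 1) :
    ∀ (k : ℕ) (x y : K), ‖x‖ ≤ ρ → ‖y‖ ≤ ρ →
      ‖(fun t => ev f t)^[k] x - (fun t => ev f t)^[k] y - lam ^ k * (x - y)‖ ≤ ρ * ‖x - y‖ ∧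
      ‖(fun t => ev f t)^[k] x - (fun t => ev f t)^[k] y‖ ≤ ‖x - y‖
  | 0, x, y, hx, hy => by
    constructor
    · have hρ0 : 0 ≤ ρ := le_trans (norm_nonneg x) hx
      simpa using mul_nonneg hρ0 (norm_nonneg (x - y))
    · simp
  | k + 1, x, y, hx, hy => by
    have hρ0 : 0 ≤ ρ := le_trans (norm_nonneg x) hx
    obtain ⟨ih1, ih2⟩ := iter_lin hf hf0 hf1 hlam hρ1 k x y hx hy
    set A := (fun t => ev f t)^[k] x with hA
    set B := (fun t => ev f t)^[k] y with hB
    have hAn : ‖A‖ ≤ ρ := iter_norm_le hf hf0 hρ1 k x hx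
    have hBn : ‖B‖ ≤ ρ := iter_norm_le hf hf0 hρ1 k y hy
    have hstep := ev_sub_lin hf hf0 hf1 hρ1 hAn hBn
    rw [Function.iterate_succ_apply', Function.iterate_succ_apply', ← hA, ← hB]
    constructor
    · have hid : ev f A - ev f B - lam ^ (k + 1) * (x - y) =
          (ev f A - ev f B - lam * (A - B)) + lam * (A - B - lam ^ k * (x - y)) := by ring
      rw [hid]
      refine le_trans (IsUltrametricDist.norm_add_le_max _ _) (max_le ?_ ?_)
      · exact hstep.trans (mul_le_mul_of_nonneg_left ih2 hρ0)
      · rw [norm_mul, hlam, one_mul]; exact ih1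
    · have hid : ev f A - ev f B = (ev f A - ev f B - lam * (A - B)) + lam * (A - B) := by ring
      rw [hid]
      refine le_trans (IsUltrametricDist.norm_add_le_max _ _) (max_le ?_ ?_)
      · calc ‖ev f A - ev f B - lam * (A - B)‖ ≤ ρ * ‖A - B‖ := hstep
          _ ≤ 1 * ‖A - B‖ := mul_le_mul_of_nonneg_right hρ1.le (norm_nonneg _)
          _ = ‖A - B‖ := one_mul _
          _ ≤ ‖x - y‖ := ih2
      · rw [norm_mul, hlam, one_mul]; exact ih2

lemma fixed_of_iterate {f : PowerSeries K} (hf : Bdd f)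
    (hf0 : PowerSeries.constantCoeff f = 0)
    {lam : K} (hf1 : PowerSeries.coeff 1 f = lam) (hlam : ‖lam‖ = 1)
    {ρ : ℝ} (hρ0 : 0 ≤ ρ) (hρ1 : ρ < 1) {k r : ℕ} (hk : ‖lam ^ k - 1‖ < 1)
    (hr : ‖(r : K)‖ = 1) {x₀ : K} (hx₀ : ‖x₀‖ ≤ ρ)
    (hper : (fun t => ev f t)^[k * r] x₀ = x₀) : (fun t => ev f t)^[k] x₀ = x₀ := by
  set φ : K → K := fun t => ev f t with hφ
  set c : ℝ := max ρ ‖lam ^ k - 1‖ with hcdef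
  have hc1 : c < 1 := max_lt hρ1 hk
  have hc0 : 0 ≤ c := le_trans hρ0 (le_max_left _ _)
  have hP : ∀ x y : K, ‖x‖ ≤ ρ → ‖y‖ ≤ ρ →
      ‖φ^[k] x - φ^[k] y - (x - y)‖ ≤ c * ‖x - y‖ ∧ ‖φ^[k] x - φ^[k] y‖ ≤ ‖x - y‖ := by
    intro x y hx hy
    obtain ⟨h1, h2⟩ := iter_lin hf hf0 hf1 hlam hρ1 k x y hx hy
    refine ⟨?_, h2⟩
    have hid : φ^[k] x - φ^[k] y - (x - y) =
        (φ^[k] x - φ^[k] y - lam ^ k * (x - y)) + (lam ^ k - 1) * (x - y) := by ring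
    rw [hid]
    refine le_trans (IsUltrametricDist.norm_add_le_max _ _) (max_le ?_ ?_)
    · exact h1.trans (mul_le_mul_of_nonneg_right (le_max_left _ _) (norm_nonneg _))
    · rw [norm_mul]
      exact mul_le_mul_of_nonneg_right (le_max_right _ _) (norm_nonneg _)
  set δ : K := φ^[k] x₀ - x₀ with hδdef
  set v : ℕ → K := fun j => (φ^[k])^[j] x₀ with hvdef
  have hvnorm : ∀ j, ‖v j‖ ≤ ρ := by
    intro j
    have : (φ^[k])^[j] x₀ = φ^[k * j] x₀ := by rw [Function.iterate_mul]
    rw [hvdef]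
    simp only [this]
    exact iter_norm_le hf hf0 hρ1 (k * j) x₀ hx₀
  have hdiff : ∀ j, ‖v (j + 1) - v j - δ‖ ≤ c * ‖δ‖ := by
    intro j
    induction j with
    | zero =>
      have : v 1 - v 0 - δ = 0 := by
        simp only [hvdef, Function.iterate_one, Function.iterate_zero, id_eq, hδdef]
        ring
      rw [this, norm_zero]
      exact mul_nonneg hc0 (norm_nonneg _)
    | succ j ih =>
      have hAB : ‖v (j + 1) - v j‖ ≤ ‖δ‖ := by
        have hid : v (j + 1) - v j = (v (j + 1) - v j - δ) + δ := by ring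
        rw [hid]
        refine le_trans (IsUltrametricDist.norm_add_le_max _ _) (max_le ?_ le_rfl)
        calc ‖v (j + 1) - v j - δ‖ ≤ c * ‖δ‖ := ih
          _ ≤ 1 * ‖δ‖ := mul_le_mul_of_nonneg_right hc1.le (norm_nonneg _)
          _ = ‖δ‖ := one_mul _
      have hstep : v (j + 2) = φ^[k] (v (j + 1)) := by
        rw [hvdef]
        exact Function.iterate_succ_apply' _ _ _
      have hstep' : v (j + 1) = φ^[k] (v j) := by
        rw [hvdef]
        exact Function.iterate_succ_apply' _ _ _
      have hid : v (j + 2) - v (j + 1) - δ =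
          (φ^[k] (v (j + 1)) - φ^[k] (v j) - (v (j + 1) - v j)) + (v (j + 1) - v j - δ) := by
        rw [hstep, hstep']; ring
      rw [hid]
      refine le_trans (IsUltrametricDist.norm_add_le_max _ _) (max_le ?_ ih)
      calc ‖φ^[k] (v (j + 1)) - φ^[k] (v j) - (v (j + 1) - v j)‖
          ≤ c * ‖v (j + 1) - v j‖ := (hP _ _ (hvnorm _) (hvnorm _)).1
        _ ≤ c * ‖δ‖ := mul_le_mul_of_nonneg_left hAB hc0
  have hvr : v r = x₀ := by
    rw [hvdef]
    simp only [← Function.iterate_mul]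
    exact hper
  have hv0 : v 0 = x₀ := rfl
  have htel : ∑ j ∈ Finset.range r, (v (j + 1) - v j - δ) = -((r : K) * δ) := by
    rw [Finset.sum_sub_distrib, Finset.sum_range_sub v, hvr, hv0, sub_self, zero_sub,
      Finset.sum_const, Finset.card_range, nsmul_eq_mul]
  have hnorm : ‖δ‖ ≤ c * ‖δ‖ := by
    calc ‖δ‖ = ‖(r : K)‖ * ‖δ‖ := by rw [hr, one_mul]
      _ = ‖(r : K) * δ‖ := (norm_mul _ _).symm
      _ = ‖∑ j ∈ Finset.range r, (v (j + 1) - v j - δ)‖ := by rw [htel, norm_neg]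
      _ ≤ c * ‖δ‖ := IsUltrametricDist.norm_sum_le_of_forall_le_of_nonneg
            (mul_nonneg hc0 (norm_nonneg _)) fun j _ => hdiff j
  have hδ0 : δ = 0 := by
    by_contra h
    have hpos : 0 < ‖δ‖ := norm_pos_iff.mpr h
    nlinarith
  have := sub_eq_zero.mp hδ0
  exact this

lemma norm_pow_sub_one_lt {u : K} (hu : ‖u‖ = 1) (h : ‖u - 1‖ < 1) :
    ∀ k : ℕ, ‖u ^ k - 1‖ < 1
  | 0 => by simpa using zero_lt_one
  | k + 1 => by
    have ih := norm_pow_sub_one_lt hu h k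
    have hid : u ^ (k + 1) - 1 = u ^ k * (u - 1) + (u ^ k - 1) := by ring
    rw [hid]
    refine lt_of_le_of_lt (IsUltrametricDist.norm_add_le_max _ _) (max_lt ?_ ih)
    rw [norm_mul, norm_pow, hu, one_pow, one_mul]
    exact h

lemma order_dvd {lam : K} (hlam : ‖lam‖ = 1) {q : ℕ} (hq0 : 0 < q)
    (hq1 : ‖lam ^ q - 1‖ < 1) (hq2 : ∀ j, 0 < j → j < q → ¬ ‖lam ^ j - 1‖ < 1)
    {j : ℕ} (hj : ‖lam ^ j - 1‖ < 1) : q ∣ j := by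
  rcases Nat.eq_zero_or_pos (j % q) with h0 | hpos
  · exact Nat.dvd_of_mod_eq_zero h0
  · exfalso
    apply hq2 (j % q) hpos (Nat.mod_lt j hq0)
    have hdecomp : lam ^ j = lam ^ (q * (j / q)) * lam ^ (j % q) := by
      rw [← pow_add]
      congr 1
      exact (Nat.div_add_mod j q).symm
    have h1 : ‖lam ^ (q * (j / q)) - 1‖ < 1 := by
      rw [pow_mul]
      exact norm_pow_sub_one_lt (by rw [norm_pow, hlam, one_pow]) hq1 (j / q)
    have hid : lam ^ (j % q) - 1 =
        (lam ^ j - 1) - lam ^ (j % q) * (lam ^ (q * (j / q)) - 1) := by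
      rw [hdecomp]; ring
    rw [hid, sub_eq_add_neg]
    refine lt_of_le_of_lt (IsUltrametricDist.norm_add_le_max _ _) (max_lt hj ?_)
    rw [norm_neg, norm_mul, norm_pow, hlam, one_pow, one_mul]
    exact h1

lemma norm_nat_of_not_dvd {p : ℕ} (hp : p.Prime) (hpK : ‖(p : K)‖ < 1)
    {r : ℕ} (hr : ¬ p ∣ r) : ‖(r : K)‖ = 1 := by
  have hcop : Nat.Coprime p r := (Nat.Prime.coprime_iff_not_dvd hp).mpr hr
  have hbez := Nat.gcd_eq_gcd_ab p r
  rw [hcop] at hbez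
  have hKeq : (1 : K) = (p : K) * ((Nat.gcdA p r : ℤ) : K) + (r : K) * ((Nat.gcdB p r : ℤ) : K) := by
    have := congrArg (fun t : ℤ => ((t : ℤ) : K)) hbez
    push_cast at this ⊢
    exact this
  have hle : ‖(r : K)‖ ≤ 1 := IsUltrametricDist.norm_natCast_le_one K r
  rcases lt_or_eq_of_le hle with hlt | heq
  · exfalso
    have h1 : ‖(p : K) * ((Nat.gcdA p r : ℤ) : K)‖ < 1 := by
      rw [norm_mul]
      calc ‖(p : K)‖ * ‖((Nat.gcdA p r : ℤ) : K)‖ ≤ ‖(p : K)‖ * 1 :=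
            mul_le_mul_of_nonneg_left (IsUltrametricDist.norm_intCast_le_one K _) (norm_nonneg _)
        _ = ‖(p : K)‖ := mul_one _
        _ < 1 := hpK
    have h2 : ‖(r : K) * ((Nat.gcdB p r : ℤ) : K)‖ < 1 := by
      rw [norm_mul]
      calc ‖(r : K)‖ * ‖((Nat.gcdB p r : ℤ) : K)‖ ≤ ‖(r : K)‖ * 1 :=
            mul_le_mul_of_nonneg_left (IsUltrametricDist.norm_intCast_le_one K _) (norm_nonneg _)
        _ = ‖(r : K)‖ := mul_one _
        _ < 1 := hlt
    have : ‖(1 : K)‖ < 1 := by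
      rw [hKeq]
      exact lt_of_le_of_lt (IsUltrametricDist.norm_add_le_max _ _) (max_lt h1 h2)
    rw [norm_one] at this
    exact lt_irrefl _ this
  · exact heq

lemma norm_sub_one_lt_of_pow {p : ℕ} (hp : p.Prime) (hpK : ‖(p : K)‖ < 1)
    {u : K} (hu : ‖u‖ = 1) (hup : ‖u ^ p - 1‖ < 1) : ‖u - 1‖ < 1 := by
  have hbin : ‖(u - 1) ^ p - (u ^ p - 1)‖ < 1 := by
    have hexp : (u - 1) ^ p - (u ^ p - 1) =
        (∑ k ∈ Finset.Ioo 0 p, u ^ k * (-1 : K) ^ (p - k) * (p.choose k : K)) +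
          ((-1 : K) ^ p + 1) := by
      have hap := add_pow u (-1 : K) p
      rw [sub_eq_add_neg u 1, hap, Finset.sum_range_succ]
      have hpp : u ^ p * (-1 : K) ^ (p - p) * (p.choose p : K) = u ^ p := by
        simp [Nat.choose_self]
      rw [hpp]
      have hsplit : ∑ k ∈ Finset.range p, u ^ k * (-1 : K) ^ (p - k) * (p.choose k : K) =
          (-1 : K) ^ p + ∑ k ∈ Finset.Ioo 0 p, u ^ k * (-1 : K) ^ (p - k) * (p.choose k : K) := by
        rw [Finset.range_eq_Ico, Finset.sum_eq_sum_Ico_succ_bot hp.pos]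
        rw [Finset.Ico_add_one_left_eq_Ioo]
        simp
      rw [hsplit]
      ring
    rw [hexp]
    refine lt_of_le_of_lt (IsUltrametricDist.norm_add_le_max _ _) (max_lt ?_ ?_)
    · refine lt_of_le_of_lt (IsUltrametricDist.norm_sum_le_of_forall_le_of_nonneg
        (norm_nonneg (p : K)) fun k hk => ?_) hpK
      obtain ⟨hk0, hkp⟩ := Finset.mem_Ioo.mp hk
      obtain ⟨c, hc⟩ := hp.dvd_choose_self hk0.ne' hkp
      rw [hc]
      push_cast
      rw [norm_mul, norm_mul, norm_mul, norm_pow, norm_pow, hu, one_pow, norm_neg, norm_one,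
        one_pow, one_mul, one_mul]
      calc ‖(p : K)‖ * ‖(c : K)‖ ≤ ‖(p : K)‖ * 1 :=
            mul_le_mul_of_nonneg_left (IsUltrametricDist.norm_natCast_le_one K c) (norm_nonneg _)
        _ = ‖(p : K)‖ := mul_one _
    · rcases hp.eq_two_or_odd' with h2 | hodd
      · subst h2
        rw [show ((-1 : K) ^ 2 + 1) = ((2 : ℕ) : K) from by push_cast; ring]
        exact hpK
      · rw [hodd.neg_one_pow, neg_add_cancel, norm_zero]
        exact zero_lt_one
  have hlt : ‖(u - 1) ^ p‖ < 1 := by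
    have hid : (u - 1) ^ p = ((u - 1) ^ p - (u ^ p - 1)) + (u ^ p - 1) := by ring
    rw [hid]
    exact lt_of_le_of_lt (IsUltrametricDist.norm_add_le_max _ _) (max_lt hbin hup)
  rw [norm_pow] at hlt
  exact (pow_lt_one_iff_of_nonneg (norm_nonneg _) hp.ne_zero).mp hlt

lemma not_p_dvd {p : ℕ} (hp : p.Prime) (hpK : ‖(p : K)‖ < 1)
    {lam : K} (hlam : ‖lam‖ = 1) {q : ℕ} (hq0 : 0 < q) (hq1 : ‖lam ^ q - 1‖ < 1)
    (hq2 : ∀ j, 0 < j → j < q → ¬ ‖lam ^ j - 1‖ < 1) : ¬ p ∣ q := by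
  intro hdvd
  obtain ⟨s, hs⟩ := hdvd
  have hs0 : 0 < s := by
    rcases Nat.eq_zero_or_pos s with h | h
    · rw [h, mul_zero] at hs; omega
    · exact h
  have hsq : s < q := by
    calc s < 2 * s := by omega
      _ ≤ p * s := Nat.mul_le_mul_right s hp.two_le
      _ = q := hs.symm
  apply hq2 s hs0 hsq
  have hu : ‖lam ^ s‖ = 1 := by rw [norm_pow, hlam, one_pow]
  have hup : ‖(lam ^ s) ^ p - 1‖ < 1 := by
    rw [← pow_mul, show s * p = q from by rw [hs]; ring]
    exact hq1
  exact norm_sub_one_lt_of_pow hp hpK hu hup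

lemma ev_fit {f : PowerSeries K} (hf : Bdd f) (hf0 : PowerSeries.constantCoeff f = 0)
    {z : K} (hz : ‖z‖ < 1) : ∀ m, ev (fit f m) z = (fun t => ev f t)^[m] z
  | 0 => by rw [fit, ev_X, Function.iterate_zero, id_eq]
  | m + 1 => by
    rw [fit, ev_fcomp hf (bdd_fit hf m) (constantCoeff_fit hf0 m) hz,
      ev_fit hf hf0 hz m, Function.iterate_succ_apply']


end Stmt3Aux

open Stmt3Aux

/-- Let `K` be an ultrametric field of residue characteristic `p > 0` (i.e. `‖(p : K)‖ < 1`
for the prime `p`), `λ ∈ K` with `‖λ‖ = 1` whose reduction has finite order `q` in the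
residue field (expressed as: `‖λ^q - 1‖ < 1` and `‖λ^j - 1‖ ≥ 1` for `0 < j < q`).
Then `p ∤ q`, and for every `f(z) = λz + ⋯` in `O_K[[z]]`, the minimal period of every
periodic point of `f` in `m_K ∖ {0}` is of the form `q·p^n`. -/
theorem stmt3 {K : Type*} [NontriviallyNormedField K] [IsUltrametricDist K] [CompleteSpace K]
    (p : ℕ) (hp : p.Prime) (hpK : ‖(p : K)‖ < 1)
    (lam : K) (hlam : ‖lam‖ = 1)
    (q : ℕ) (hq0 : 0 < q) (hq1 : ‖lam ^ q - 1‖ < 1)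
    (hq2 : ∀ j, 0 < j → j < q → ¬ ‖lam ^ j - 1‖ < 1) :
    ¬ p ∣ q ∧
    ∀ (f : PowerSeries K), (∀ n, ‖PowerSeries.coeff n f‖ ≤ 1) →
      PowerSeries.constantCoeff f = 0 → PowerSeries.coeff 1 f = lam →
      ∀ z₀ : K, ‖z₀‖ < 1 → z₀ ≠ 0 →
        ∀ ℓ : ℕ, 0 < ℓ →
          HasSum (fun n : ℕ => (PowerSeries.coeff n (fit f ℓ)) * z₀ ^ n) z₀ →
          (∀ m, 0 < m → m < ℓ →
            ¬ HasSum (fun n : ℕ => (PowerSeries.coeff n (fit f m)) * z₀ ^ n) z₀) →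
          ∃ n : ℕ, ℓ = q * p ^ n := by
  refine ⟨not_p_dvd hp hpK hlam hq0 hq1 hq2, ?_⟩
  intro f hbdd hconst hcoeff1 z₀ hz₀ hz₀0 ℓ hℓ hsum hmin
  set ρ : ℝ := ‖z₀‖ with hρdef
  have hρ1 : ρ < 1 := hz₀
  have hρ0 : 0 < ρ := norm_pos_iff.mpr hz₀0
  set φ : K → K := fun t => ev f t with hφdef
  have hev : ∀ m, ev (fit f m) z₀ = φ^[m] z₀ := fun m => ev_fit hbdd hconst hz₀ m
  have hSum_m : ∀ m, HasSum (fun n => PowerSeries.coeff n (fit f m) * z₀ ^ n) (φ^[m] z₀) :=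
    fun m => (hev m) ▸ hasSum_ev (bdd_fit hbdd m) hz₀
  have hwℓ : φ^[ℓ] z₀ = z₀ := (hSum_m ℓ).unique hsum
  have hwm : ∀ m, 0 < m → m < ℓ → φ^[m] z₀ ≠ z₀ := fun m h1 h2 he =>
    hmin m h1 h2 (by have hS := hSum_m m; rw [he] at hS; exact hS)
  have hwnorm : ∀ m, ‖φ^[m] z₀‖ ≤ ρ := fun m => iter_norm_le hbdd hconst hρ1 m z₀ le_rfl
  -- step 1 : q ∣ ℓ
  have hclaim : ∀ m, ‖φ^[m] z₀ - lam ^ m * z₀‖ ≤ ρ * ρ := by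
    intro m
    induction m with
    | zero =>
      simp only [Function.iterate_zero, id_eq, pow_zero, one_mul, sub_self, norm_zero]
      positivity
    | succ m ih =>
      have hx : ‖φ^[m] z₀‖ ≤ ρ := hwnorm m
      have h1 : ‖ev f (φ^[m] z₀) - lam * (φ^[m] z₀)‖ ≤ ρ * ρ := by
        have h := ev_sub_lin hbdd hconst hcoeff1 hρ1 hx
          (by rw [norm_zero]; exact hρ0.le : ‖(0 : K)‖ ≤ ρ)
        rw [ev_zero hconst, sub_zero, sub_zero] at h
        exact h.trans (mul_le_mul_of_nonneg_left hx hρ0.le)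
      have hdecomp : φ^[m + 1] z₀ - lam ^ (m + 1) * z₀ =
          (ev f (φ^[m] z₀) - lam * (φ^[m] z₀)) + lam * (φ^[m] z₀ - lam ^ m * z₀) := by
        rw [Function.iterate_succ_apply']
        show ev f (φ^[m] z₀) - lam ^ (m + 1) * z₀ = _
        ring
      rw [hdecomp]
      refine le_trans (IsUltrametricDist.norm_add_le_max _ _) (max_le h1 ?_)
      rw [norm_mul, hlam, one_mul]
      exact ih
  have hqℓ : ‖lam ^ ℓ - 1‖ < 1 := by
    have h := hclaim ℓ
    rw [hwℓ, show z₀ - lam ^ ℓ * z₀ = (1 - lam ^ ℓ) * z₀ from by ring, norm_mul, ← hρdef] at h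
    have h2 : ‖1 - lam ^ ℓ‖ ≤ ρ := le_of_mul_le_mul_right h hρ0
    rw [norm_sub_rev] at h2
    exact lt_of_le_of_lt h2 hρ1
  obtain ⟨m, hm⟩ := order_dvd hlam hq0 hq1 hq2 hqℓ
  have hm0 : 0 < m := by
    rcases Nat.eq_zero_or_pos m with h | h
    · rw [h, mul_zero] at hm; omega
    · exact h
  -- step 2 : m = p ^ n
  set n : ℕ := m.factorization p with hndef
  set r : ℕ := m / p ^ n with hrdef
  have hord : p ^ n * r = m := Nat.ordProj_mul_ordCompl_eq_self m p
  have hpr : ¬ p ∣ r := Nat.not_dvd_ordCompl hp hm0.ne'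
  have hr0 : 0 < r := Nat.ordCompl_pos p hm0.ne'
  set k : ℕ := q * p ^ n with hkdef
  have hkr : k * r = ℓ := by rw [hm, ← hord, hkdef]; ring
  have hkpos : 0 < k := by
    have := pow_pos hp.pos n
    positivity
  have hlamk : ‖lam ^ k - 1‖ < 1 := by
    rw [hkdef, pow_mul]
    exact norm_pow_sub_one_lt (by rw [norm_pow, hlam, one_pow]) hq1 (p ^ n)
  have hper : φ^[k * r] z₀ = z₀ := by rw [hkr]; exact hwℓ
  have hfix : φ^[k] z₀ = z₀ :=
    fixed_of_iterate hbdd hconst hcoeff1 hlam hρ0.le hρ1 hlamk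
      (norm_nat_of_not_dvd hp hpK hpr) le_rfl hper
  have hr1 : r = 1 := by
    by_contra hr1
    have hkℓ : k < ℓ := by
      rw [← hkr]
      calc k = k * 1 := (mul_one k).symm
        _ < k * r := (mul_lt_mul_iff_right₀ hkpos).mpr (by omega)
    exact hwm k hkpos hkℓ hfix
  exact ⟨n, by rw [hm, ← hord, hr1, mul_one]⟩
end

section
/- Let K be an ultrametric field of residue characteristic p > 0, λ ∈ K with |λ| = 1 such that the reduction of λ has finite order q in the residue field, and suppose λ^q ≠ 1. Let f(z) = λz + ... be a power series in O_K[[z]]. Then every periodic point w₀ ∈ m_K \ {0} of f of minimal period q satisfies |w₀| ≥ |λ^q − 1|^{1/q}. -/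
open PowerSeries

set_option linter.unusedSectionVars false
set_option linter.unusedVariables false

namespace Stmt4Aux


variable {K : Type*} [NontriviallyNormedField K] [IsUltrametricDist K] [CompleteSpace K]

/-- Coefficients bounded by 1. -/
def Bnd (g : PowerSeries K) : Prop := ∀ n, ‖coeff n g‖ ≤ 1

/-- Evaluation of a power series. -/
noncomputable def pe (g : PowerSeries K) (w : K) : K := ∑' n, coeff n g * w ^ n

lemma term_norm_le {g : PowerSeries K} (hg : Bnd g) (w : K) (n : ℕ) :
    ‖coeff n g * w ^ n‖ ≤ ‖w‖ ^ n := by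
  rw [norm_mul, norm_pow]
  exact mul_le_of_le_one_left (pow_nonneg (norm_nonneg w) n) (hg n)

lemma summable_norm_pe {g : PowerSeries K} (hg : Bnd g) {w : K} (hw : ‖w‖ < 1) :
    Summable fun n => ‖coeff n g * w ^ n‖ :=
  Summable.of_nonneg_of_le (fun _ => norm_nonneg _) (term_norm_le hg w)
    (summable_geometric_of_lt_one (norm_nonneg w) hw)

lemma summable_pe {g : PowerSeries K} (hg : Bnd g) {w : K} (hw : ‖w‖ < 1) :
    Summable fun n => coeff n g * w ^ n :=
  (summable_norm_pe hg hw).of_norm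

lemma norm_pe_le_one {g : PowerSeries K} (hg : Bnd g) {w : K} (hw : ‖w‖ ≤ 1) :
    ‖pe g w‖ ≤ 1 := by
  refine IsUltrametricDist.norm_tsum_le_of_forall_le_of_nonneg zero_le_one (fun n => ?_)
  rw [norm_mul, norm_pow]
  exact mul_le_one₀ (hg n) (pow_nonneg (norm_nonneg w) n) (pow_le_one₀ (norm_nonneg w) hw)

lemma norm_pe_le {g : PowerSeries K} (hg : Bnd g) (h0 : constantCoeff g = 0) {w : K}
    (hw : ‖w‖ ≤ 1) : ‖pe g w‖ ≤ ‖w‖ := by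
  refine IsUltrametricDist.norm_tsum_le_of_forall_le_of_nonneg (norm_nonneg w) (fun n => ?_)
  match n with
  | 0 => simp [coeff_zero_eq_constantCoeff, h0]
  | n + 1 =>
    refine (term_norm_le hg w (n + 1)).trans ?_
    calc ‖w‖ ^ (n+1) ≤ ‖w‖ ^ 1 :=
          pow_le_pow_of_le_one (norm_nonneg w) hw (by omega)
      _ = ‖w‖ := pow_one _

lemma pe_zero_eval (g : PowerSeries K) : pe g 0 = constantCoeff g := by
  rw [pe, tsum_eq_single 0 (fun n hn => by simp [zero_pow hn])]
  simp

lemma Bnd.mul {a b : PowerSeries K} (ha : Bnd a) (hb : Bnd b) : Bnd (a * b) := by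
  intro n
  rw [coeff_mul]
  refine IsUltrametricDist.norm_sum_le_of_forall_le_of_nonneg zero_le_one (fun kl _ => ?_)
  rw [norm_mul]
  exact mul_le_one₀ (ha kl.1) (norm_nonneg _) (hb kl.2)

lemma Bnd.one : Bnd (1 : PowerSeries K) := by
  intro n
  rw [coeff_one]
  split <;> simp

lemma Bnd.pow {a : PowerSeries K} (ha : Bnd a) (m : ℕ) : Bnd (a ^ m) := by
  induction m with
  | zero => simpa using Bnd.one
  | succ m ih => rw [pow_succ]; exact ih.mul ha

lemma Bnd.X : Bnd (X : PowerSeries K) := by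
  intro n
  rw [coeff_X]
  split <;> simp

lemma Bnd.sub {a b : PowerSeries K} (ha : Bnd a) (hb : Bnd b) : Bnd (a - b) := by
  intro n
  rw [map_sub, sub_eq_add_neg]
  refine le_trans ?_ (max_le (ha n) (hb n))
  simpa using IsUltrametricDist.norm_add_le_max (coeff n a) (-(coeff n b))

lemma Bnd.C {w : K} (hw : ‖w‖ ≤ 1) : Bnd (PowerSeries.C w) := by
  intro n
  rw [coeff_C]
  split <;> simp [hw]

lemma pe_mul {a b : PowerSeries K} (ha : Bnd a) (hb : Bnd b) {w : K} (hw : ‖w‖ < 1) :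
    pe (a * b) w = pe a w * pe b w := by
  rw [pe, pe, pe, tsum_mul_tsum_eq_tsum_sum_antidiagonal_of_summable_norm
    (summable_norm_pe ha hw) (summable_norm_pe hb hw)]
  congr 1
  funext n
  rw [coeff_mul, Finset.sum_mul]
  refine Finset.sum_congr rfl (fun kl hkl => ?_)
  have h := Finset.HasAntidiagonal.mem_antidiagonal.mp hkl
  rw [mul_mul_mul_comm, ← pow_add, h]

lemma pe_pow {a : PowerSeries K} (ha : Bnd a) (m : ℕ) {w : K} (hw : ‖w‖ < 1) :
    pe (a ^ m) w = (pe a w) ^ m := by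
  induction m with
  | zero =>
    rw [pow_zero, pow_zero, pe, tsum_eq_single 0 (fun n hn => by simp [coeff_one, hn])]
    simp
  | succ m ih => rw [pow_succ, pow_succ, pe_mul (ha.pow m) ha hw, ih]

lemma pe_sub {a b : PowerSeries K} {w : K} (ha : Summable fun n => coeff n a * w ^ n)
    (hb : Summable fun n => coeff n b * w ^ n) :
    pe (a - b) w = pe a w - pe b w := by
  rw [pe, pe, pe, ← Summable.tsum_sub ha hb]
  congr 1
  funext n
  rw [map_sub, sub_mul]

lemma pe_C (c w : K) : pe (PowerSeries.C c) w = c := by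
  rw [pe, tsum_eq_single 0 (fun n hn => by simp [coeff_C, hn])]
  simp

lemma pe_X (w : K) : pe (X : PowerSeries K) w = w := by
  rw [pe, tsum_eq_single 1 (fun n hn => by simp [coeff_X, hn])]
  simp



lemma coeff_pow_eq_zero {g : PowerSeries K} (h0 : constantCoeff g = 0) {m n : ℕ} (h : n < m) :
    coeff n (g ^ m) = 0 := by
  have hd : (X : PowerSeries K) ^ m ∣ g ^ m := pow_dvd_pow_of_dvd (X_dvd_iff.mpr h0) m
  exact (X_pow_dvd_iff.mp hd) n h

lemma pe_fcomp {f g : PowerSeries K} (hf : Bnd f) (hg : Bnd g) (h0 : constantCoeff g = 0)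
    {w : K} (hw : ‖w‖ < 1) : pe (fcomp f g) w = pe f (pe g w) := by
  set s : ℝ := Real.sqrt ‖w‖ with hsdef
  have hs0 : 0 ≤ s := Real.sqrt_nonneg _
  have hss : s * s = ‖w‖ := Real.mul_self_sqrt (norm_nonneg w)
  have hs1 : s < 1 := by nlinarith
  have hgeo : Summable fun n : ℕ => s ^ n := summable_geometric_of_lt_one hs0 hs1
  set F : ℕ → ℕ → K := fun m n => coeff m f * coeff n (g ^ m) * w ^ n with hF
  have hFs : Summable (Function.uncurry F) := by
    refine Summable.of_norm_bounded
      (hgeo.mul_of_nonneg hgeo (fun n => pow_nonneg hs0 n) (fun n => pow_nonneg hs0 n)) ?_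
    rintro ⟨m, n⟩
    rcases lt_or_ge n m with h | h
    · simp only [Function.uncurry, hF, coeff_pow_eq_zero h0 h, mul_zero, zero_mul, norm_zero]
      exact mul_nonneg (pow_nonneg hs0 m) (pow_nonneg hs0 n)
    · have h1 : ‖F m n‖ ≤ ‖w‖ ^ n := by
        rw [hF]
        simp only [norm_mul, norm_pow]
        exact mul_le_of_le_one_left (pow_nonneg (norm_nonneg w) n)
          (mul_le_one₀ (hf m) (norm_nonneg _) ((hg.pow m) n))
      refine h1.trans ?_
      calc ‖w‖ ^ n = (s * s) ^ n := by rw [hss]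
        _ = s ^ n * s ^ n := mul_pow s s n
        _ = s ^ (n + n) := (pow_add s n n).symm
        _ ≤ s ^ (m + n) := pow_le_pow_of_le_one hs0 hs1.le (by omega)
        _ = s ^ m * s ^ n := pow_add s m n
  have hrow : ∀ n, (coeff n (fcomp f g)) * w ^ n = ∑' m, F m n := by
    intro n
    rw [fcomp, coeff_mk, Finset.sum_mul,
      tsum_eq_sum (s := Finset.range (n + 1)) (fun m hm => by
        have : n < m := by simpa using hm
        simp [hF, coeff_pow_eq_zero h0 this])]
  have hcol : ∀ m, (∑' n, F m n) = coeff m f * (pe g w) ^ m := by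
    intro m
    rw [← pe_pow hg m hw, pe]
    simp only [hF, mul_assoc]
    exact tsum_mul_left
  calc pe (fcomp f g) w = ∑' n, ∑' m, F m n := by rw [pe]; exact tsum_congr hrow
    _ = ∑' m, ∑' n, F m n := Summable.tsum_comm hFs
    _ = ∑' m, coeff m f * (pe g w) ^ m := tsum_congr hcol
    _ = pe f (pe g w) := rfl

noncomputable def sh (h : PowerSeries K) (w : K) : PowerSeries K :=
  PowerSeries.mk fun j => ∑' t, coeff (j + 1 + t) h * w ^ t

lemma summable_sh {h : PowerSeries K} (hh : Bnd h) {w : K} (hw : ‖w‖ < 1) (j : ℕ) :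
    Summable fun t => coeff (j + 1 + t) h * w ^ t := by
  refine Summable.of_norm_bounded (summable_geometric_of_lt_one (norm_nonneg w) hw) ?_
  intro t
  rw [norm_mul, norm_pow]
  exact mul_le_of_le_one_left (pow_nonneg (norm_nonneg w) t) (hh _)

lemma bnd_sh {h : PowerSeries K} (hh : Bnd h) {w : K} (hw : ‖w‖ ≤ 1) : Bnd (sh h w) := by
  intro j
  rw [sh, coeff_mk]
  refine IsUltrametricDist.norm_tsum_le_of_forall_le_of_nonneg zero_le_one fun t => ?_
  rw [norm_mul, norm_pow]
  exact mul_le_one₀ (hh _) (pow_nonneg (norm_nonneg w) t) (pow_le_one₀ (norm_nonneg w) hw)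

lemma sh_spec {h : PowerSeries K} (hh : Bnd h) {w : K} (hw : ‖w‖ < 1) :
    (X - PowerSeries.C w) * sh h w = h - PowerSeries.C (pe h w) := by
  ext k
  rw [sub_mul, map_sub, map_sub]
  match k with
  | 0 =>
    have hs := summable_sh hh hw 0
    have hps := summable_pe hh hw
    simp only [coeff_zero_eq_constantCoeff, map_mul, constantCoeff_X, zero_mul,
      constantCoeff_C, sh, constantCoeff_mk]
    rw [pe, Summable.tsum_eq_zero_add hps]
    have : ∀ t : ℕ, coeff (t + 1) h * w ^ (t + 1) = w * (coeff (0 + 1 + t) h * w ^ t) := by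
      intro t
      rw [zero_add, add_comm t 1]
      ring
    rw [tsum_congr this, tsum_mul_left]
    simp
  | k + 1 =>
    have hs1 := summable_sh hh hw k
    rw [coeff_succ_X_mul, coeff_C_mul]
    simp only [sh, coeff_mk, coeff_C, Nat.succ_ne_zero, if_false, sub_zero]
    rw [Summable.tsum_eq_zero_add hs1]
    have : ∀ t : ℕ, coeff (k + 1 + (t + 1)) h * w ^ (t + 1)
        = w * (coeff (k + 1 + 1 + t) h * w ^ t) := by
      intro t
      have : k + 1 + (t + 1) = k + 1 + 1 + t := by omega
      rw [this]
      ring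
    rw [tsum_congr this, tsum_mul_left]
    simp

lemma pe_sh {h : PowerSeries K} (hh : Bnd h) {w z : K} (hw : ‖w‖ < 1) (hz : ‖z‖ < 1) :
    pe h z = pe h w + (z - w) * pe (sh h w) z := by
  have h1 : Bnd (X - PowerSeries.C w) := Bnd.X.sub (Bnd.C hw.le)
  have h2 : Bnd (sh h w) := bnd_sh hh hw.le
  have e1 : pe ((X - PowerSeries.C w) * sh h w) z = (z - w) * pe (sh h w) z := by
    rw [pe_mul h1 h2 hz, pe_sub (summable_pe Bnd.X hz) (summable_pe (Bnd.C hw.le) hz),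
      pe_X, pe_C]
  have e2 : pe (h - PowerSeries.C (pe h w)) z = pe h z - pe h w := by
    rw [pe_sub (summable_pe hh hz) (summable_pe (Bnd.C (norm_pe_le_one hh hw.le)) hz), pe_C]
  rw [sh_spec hh hw, e2] at e1
  linear_combination e1



lemma bnd_fcomp {f g : PowerSeries K} (hf : Bnd f) (hg : Bnd g) : Bnd (fcomp f g) := by
  intro n
  rw [fcomp, coeff_mk]
  refine IsUltrametricDist.norm_sum_le_of_forall_le_of_nonneg zero_le_one (fun m _ => ?_)
  rw [norm_mul]
  exact mul_le_one₀ (hf m) (norm_nonneg _) ((hg.pow m) n)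

lemma bnd_fit {f : PowerSeries K} (hf : Bnd f) : ∀ n, Bnd (fit f n)
  | 0 => Bnd.X
  | n + 1 => bnd_fcomp hf (bnd_fit hf n)

lemma const_fcomp {f : PowerSeries K} (hf0 : constantCoeff f = 0) (g : PowerSeries K) :
    constantCoeff (fcomp f g) = 0 := by
  rw [← coeff_zero_eq_constantCoeff_apply, fcomp, coeff_mk]
  simp [coeff_zero_eq_constantCoeff_apply, hf0]

lemma const_fit {f : PowerSeries K} (hf0 : constantCoeff f = 0) :
    ∀ n, constantCoeff (fit f n) = 0
  | 0 => constantCoeff_X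
  | n + 1 => const_fcomp hf0 (fit f n)

lemma coeff1_fcomp {f : PowerSeries K} (hf0 : constantCoeff f = 0) (g : PowerSeries K) :
    coeff 1 (fcomp f g) = coeff 1 f * coeff 1 g := by
  rw [fcomp, coeff_mk]
  rw [Finset.sum_range_succ, Finset.sum_range_succ, Finset.sum_range_zero, pow_one, pow_zero]
  simp [coeff_one, coeff_zero_eq_constantCoeff_apply, hf0]

lemma coeff1_fit {f : PowerSeries K} (hf0 : constantCoeff f = 0) (lam : K)
    (hf1 : coeff 1 f = lam) : ∀ n, coeff 1 (fit f n) = lam ^ n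
  | 0 => by
    rw [show fit f 0 = (X : PowerSeries K) from rfl, pow_zero]
    exact coeff_one_X
  | n + 1 => by
    rw [show fit f (n + 1) = fcomp f (fit f n) from rfl, coeff1_fcomp hf0, hf1,
      coeff1_fit hf0 lam hf1 n, pow_succ, mul_comm]


end Stmt4Aux

open Stmt4Aux

/-- Let `K` be an ultrametric field of residue characteristic `p > 0`, `λ ∈ K` with
`‖λ‖ = 1` whose reduction has order `q` in the residue field, and `λ^q ≠ 1`.  Then every
periodic point `w₀ ∈ m_K ∖ {0}` of `f(z) = λz + ⋯ ∈ O_K[[z]]` of minimal period `q`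
satisfies `‖w₀‖ ≥ ‖λ^q - 1‖^(1/q)`. -/
theorem stmt4 {K : Type*} [NontriviallyNormedField K] [IsUltrametricDist K] [CompleteSpace K]
    (p : ℕ) (hp : p.Prime) (hpK : ‖(p : K)‖ < 1)
    (lam : K) (hlam : ‖lam‖ = 1)
    (q : ℕ) (hq0 : 0 < q) (hq1 : ‖lam ^ q - 1‖ < 1)
    (hq2 : ∀ j, 0 < j → j < q → ¬ ‖lam ^ j - 1‖ < 1)
    (hqne : lam ^ q ≠ 1)
    (f : PowerSeries K) (hf : ∀ n, ‖PowerSeries.coeff n f‖ ≤ 1)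
    (hf0 : PowerSeries.constantCoeff f = 0) (hf1 : PowerSeries.coeff 1 f = lam)
    (w₀ : K) (hw : ‖w₀‖ < 1) (hw0 : w₀ ≠ 0)
    (hper : HasSum (fun n : ℕ => (PowerSeries.coeff n (fit f q)) * w₀ ^ n) w₀)
    (hmin : ∀ m, 0 < m → m < q →
      ¬ HasSum (fun n : ℕ => (PowerSeries.coeff n (fit f m)) * w₀ ^ n) w₀) :
    ‖lam ^ q - 1‖ ^ ((1 : ℝ) / (q : ℝ)) ≤ ‖w₀‖ := by
  have hBf : Bnd f := hf
  have hBfit : ∀ n, Bnd (fit f n) := bnd_fit hBf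
  have hCfit : ∀ n, constantCoeff (fit f n) = 0 := const_fit hf0
  set r := ‖w₀‖ with hr
  have hr0 : 0 ≤ r := norm_nonneg _
  set F : K → K := fun w => pe f w with hFdef
  set wv : ℕ → K := fun i => F^[i] w₀ with hwvdef
  have hwv_norm : ∀ i, ‖wv i‖ ≤ r := by
    intro i
    induction i with
    | zero => simp [hwvdef]; exact hr.ge
    | succ i ih =>
      have : wv (i + 1) = F (wv i) := Function.iterate_succ_apply' F i w₀
      rw [this]
      exact le_trans (norm_pe_le hBf hf0 (le_trans ih hw.le)) ih
  have hwv_lt : ∀ i, ‖wv i‖ < 1 := fun i => lt_of_le_of_lt (hwv_norm i) hw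
  have pe_fit_eq : ∀ n (w : K), ‖w‖ < 1 → pe (fit f n) w = F^[n] w := by
    intro n
    induction n with
    | zero => intro w hw'; simpa [fit] using pe_X w
    | succ n ih =>
      intro w hw'
      rw [show fit f (n + 1) = fcomp f (fit f n) from rfl,
        pe_fcomp hBf (hBfit n) (hCfit n) hw', ih w hw', hFdef,
        Function.iterate_succ_apply']
  have hq_fix : F^[q] w₀ = w₀ := by
    rw [← pe_fit_eq q w₀ hw]
    exact hper.tsum_eq
  have hFk0 : ∀ k, F^[k] (0 : K) = 0 := by
    intro k
    induction k with
    | zero => rfl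
    | succ k ih =>
      rw [Function.iterate_succ_apply', ih, hFdef]
      simpa [hf0] using pe_zero_eval f
  have hback : ∀ j, j < q → F^[q - j] (wv j) = w₀ := by
    intro j hj
    rw [hwvdef, ← Function.iterate_add_apply, Nat.sub_add_cancel hj.le, hq_fix]
  have hwv_ne : ∀ j, j < q → wv j ≠ 0 := by
    intro j hj hcon
    have h1 := hback j hj
    rw [hcon, hFk0] at h1
    exact hw0 h1.symm
  have hwv_inj : ∀ i j, i < j → j < q → wv i ≠ wv j := by
    intro i j hij hjq hcon
    have h2 : F^[(q - j) + i] w₀ = w₀ := by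
      rw [Function.iterate_add_apply, show F^[i] w₀ = wv i from rfl, hcon, hback j hjq]
    refine hmin (q - j + i) (by omega) (by omega) ?_
    have hsum : Summable (fun n => coeff n (fit f (q - j + i)) * w₀ ^ n) :=
      summable_pe (hBfit _) hw
    rw [hsum.hasSum_iff]
    exact (pe_fit_eq _ w₀ hw).trans h2
  -- the series h = f^q - X
  set h : PowerSeries K := fit f q - X with hhdef
  have hBh : Bnd h := (hBfit q).sub Bnd.X
  have hpe_h : ∀ z : K, ‖z‖ < 1 → pe h z = F^[q] z - z := by
    intro z hz
    rw [hhdef, pe_sub (summable_pe (hBfit q) hz) (summable_pe Bnd.X hz), pe_fit_eq q z hz, pe_X]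
  have hroot_h : ∀ j, j < q → pe h (wv j) = 0 := by
    intro j hj
    rw [hpe_h (wv j) (hwv_lt j), hwvdef]
    simp only []
    rw [← Function.iterate_add_apply, add_comm q j, Function.iterate_add_apply, hq_fix]
    exact sub_self _
  have hch0 : constantCoeff h = 0 := by
    rw [hhdef, map_sub, hCfit q, constantCoeff_X, sub_zero]
  -- the chain of divided differences
  set u : ℕ → PowerSeries K := fun i => Nat.rec (sh h 0) (fun i ui => sh ui (wv i)) i with hudef
  have hu0 : u 0 = sh h 0 := rfl
  have husucc : ∀ i, u (i + 1) = sh (u i) (wv i) := fun i => rfl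
  have hBu : ∀ i, Bnd (u i) := by
    intro i
    induction i with
    | zero => exact bnd_sh hBh (by simp)
    | succ i ih => rw [husucc]; exact bnd_sh ih (hwv_lt i).le
  have hroot : ∀ i j, i ≤ j → j < q → pe (u i) (wv j) = 0 := by
    intro i
    induction i with
    | zero =>
      intro j hij hjq
      have hps := pe_sh hBh (w := 0) (z := wv j) (by simp) (hwv_lt j)
      rw [hroot_h j hjq, pe_zero_eval h, hch0, sub_zero, zero_add, ← hu0] at hps
      exact (mul_eq_zero.mp hps.symm).resolve_left (hwv_ne j hjq)
    | succ i ih =>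
      intro j hij hjq
      have hiq : i < q := by omega
      have hps := pe_sh (hBu i) (w := wv i) (z := wv j) (hwv_lt i) (hwv_lt j)
      rw [ih j (by omega) hjq, ih i le_rfl hiq, zero_add, ← husucc] at hps
      have hne : wv j - wv i ≠ 0 := sub_ne_zero.mpr (Ne.symm (hwv_inj i j (by omega) hjq))
      exact (mul_eq_zero.mp hps.symm).resolve_left hne
  have hstep : ∀ i, i < q → ‖pe (u i) 0‖ ≤ r * ‖pe (u (i + 1)) 0‖ := by
    intro i hiq
    have hps := pe_sh (hBu i) (w := wv i) (z := (0 : K)) (hwv_lt i) (by simp)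
    rw [hroot i i le_rfl hiq, zero_add, zero_sub, ← husucc] at hps
    rw [hps, norm_mul, norm_neg]
    exact mul_le_mul_of_nonneg_right (hwv_norm i) (norm_nonneg _)
  have hchain : ∀ k, k ≤ q → ‖pe (u 0) 0‖ ≤ r ^ k * ‖pe (u k) 0‖ := by
    intro k
    induction k with
    | zero => intro _; simp
    | succ k ih =>
      intro hk
      refine (ih (by omega)).trans ?_
      calc r ^ k * ‖pe (u k) 0‖ ≤ r ^ k * (r * ‖pe (u (k + 1)) 0‖) :=
            mul_le_mul_of_nonneg_left (hstep k (by omega)) (pow_nonneg hr0 k)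
        _ = r ^ (k + 1) * ‖pe (u (k + 1)) 0‖ := by ring
  have hval : pe (u 0) 0 = lam ^ q - 1 := by
    rw [pe_zero_eval, hu0, ← coeff_zero_eq_constantCoeff_apply, sh, coeff_mk,
      tsum_eq_single 0 (fun t ht => by simp [zero_pow ht])]
    simp only [pow_zero, mul_one]
    rw [hhdef, map_sub, coeff1_fit hf0 lam hf1 q, coeff_one_X]
  have hfin : ‖lam ^ q - 1‖ ≤ r ^ q := by
    rw [← hval]
    refine (hchain q le_rfl).trans ?_
    calc r ^ q * ‖pe (u q) 0‖ ≤ r ^ q * 1 :=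
          mul_le_mul_of_nonneg_left (norm_pe_le_one (hBu q) (by simp)) (pow_nonneg hr0 q)
      _ = r ^ q := mul_one _
  -- conclude with rpow monotonicity
  have hqR : (q : ℝ) ≠ 0 := Nat.cast_ne_zero.mpr hq0.ne'
  have h2 : ‖lam ^ q - 1‖ ^ ((1 : ℝ) / (q : ℝ)) ≤ (r ^ q) ^ ((1 : ℝ) / (q : ℝ)) :=
    Real.rpow_le_rpow (norm_nonneg _) hfin (by positivity)
  calc ‖lam ^ q - 1‖ ^ ((1 : ℝ) / (q : ℝ)) ≤ (r ^ q) ^ ((1 : ℝ) / (q : ℝ)) := h2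
    _ = r := by
      rw [← Real.rpow_natCast r q, ← Real.rpow_mul hr0]
      rw [mul_one_div, div_self hqR, Real.rpow_one]
end

section
/- Let K be an ultrametric field of positive residue characteristic such that λ ∈ K satisfies |λ| = 1, the reduction of λ has finite order q in the residue field, and λ^q ≠ 1. Suppose moreover K has positive characteristic p. Then for every power series f(z) = λz + ... in O_K[[z]], there exists r > 0 such that every periodic point of f in m_K \ {0} has absolute value at least r; in fact every periodic point z₀ ≠ 0 satisfies |z₀| ≥ |λ^q − 1|^{(p−1)/(q p)} or |z₀| ≥ |λ^q − 1|^{1/q}. In particular, the irrationally indifferent fixed point z = 0 is isolated as a periodic point. -/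
open PowerSeries

open Finset
open IsUltrametricDist

section Formal

variable {R : Type*} [CommRing R]

lemma coeff_fcomp (n : ℕ) (f g : PowerSeries R) :
    coeff n (fcomp f g) = ∑ m ∈ range (n + 1), coeff m f * coeff n (g ^ m) := by
  simp [fcomp]

lemma coeff_pow_eq_zero {g : PowerSeries R} (hg : constantCoeff g = 0) :
    ∀ m n : ℕ, n < m → coeff n (g ^ m) = 0 := by
  intro m
  induction m with
  | zero => intro n hn; omega
  | succ m ih =>
    intro n hn
    rw [pow_succ, coeff_mul]
    apply Finset.sum_eq_zero
    rintro ⟨r, j⟩ hrj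
    rw [Finset.HasAntidiagonal.mem_antidiagonal] at hrj
    rcases lt_or_ge r m with h | h
    · rw [ih r h, zero_mul]
    · have : j = 0 := by omega
      subst this
      simp [coeff_zero_eq_constantCoeff, hg]

lemma fcomp_X_right (f : PowerSeries R) : fcomp f X = f := by
  ext n
  rw [coeff_fcomp]
  have : ∀ m ∈ range (n+1), coeff m f * coeff n ((X : PowerSeries R) ^ m)
      = if m = n then coeff n f else 0 := by
    intro m hm
    rw [coeff_X_pow]
    by_cases h : m = n
    · subst h; simp
    · simp [h, Ne.symm h]
  rw [Finset.sum_congr rfl this, Finset.sum_ite_eq' (range (n+1)) n (fun _ => coeff n f)]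
  simp

lemma fcomp_X_left (g : PowerSeries R) (hg : constantCoeff g = 0) : fcomp X g = g := by
  ext n
  rw [coeff_fcomp]
  have : ∀ m ∈ range (n+1), coeff m (X : PowerSeries R) * coeff n (g ^ m)
      = if m = 1 then coeff n (g^1) else 0 := by
    intro m hm
    rw [coeff_X]
    by_cases h : m = 1
    · subst h; simp
    · simp [h]
  rw [Finset.sum_congr rfl this]
  rcases Nat.eq_zero_or_pos n with rfl | hn
  · simp [coeff_zero_eq_constantCoeff, hg]
  · rw [Finset.sum_ite_eq' (range (n+1)) 1 (fun _ => coeff n (g^1))]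
    have h1 : (1:ℕ) ∈ range (n+1) := by
      simp only [Finset.mem_range]; omega
    rw [if_pos h1, pow_one]

lemma constantCoeff_fcomp (f g : PowerSeries R) :
    constantCoeff (fcomp f g) = constantCoeff f := by
  have := coeff_fcomp 0 f g
  rw [coeff_zero_eq_constantCoeff] at this
  rw [this]
  simp [coeff_zero_eq_constantCoeff]

lemma fcomp_add_left (f₁ f₂ g : PowerSeries R) :
    fcomp (f₁ + f₂) g = fcomp f₁ g + fcomp f₂ g := by
  ext n
  simp [coeff_fcomp, add_mul, Finset.sum_add_distrib]

lemma fcomp_smul_left (c : R) (f g : PowerSeries R) :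
    fcomp (c • f) g = c • fcomp f g := by
  ext n
  simp [coeff_fcomp, Finset.mul_sum, mul_assoc]

lemma coeff_fcomp_ext {g : PowerSeries R} (hg : constantCoeff g = 0)
    (f : PowerSeries R) (n N : ℕ) (hN : n < N) :
    coeff n (fcomp f g) = ∑ m ∈ range N, coeff m f * coeff n (g ^ m) := by
  rw [coeff_fcomp]
  apply Finset.sum_subset
  · intro m hm
    simp only [Finset.mem_range] at *
    omega
  · intro m hm hm'
    simp only [Finset.mem_range] at *
    rw [coeff_pow_eq_zero hg m n (by omega), mul_zero]

lemma fcomp_one_left (g : PowerSeries R) : fcomp 1 g = 1 := by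
  ext n
  rw [coeff_fcomp]
  have : ∀ m ∈ range (n+1), coeff m (1 : PowerSeries R) * coeff n (g ^ m)
      = if m = 0 then coeff n (1 : PowerSeries R) else 0 := by
    intro m hm
    rw [coeff_one]
    by_cases h : m = 0 <;> simp [h]
  rw [Finset.sum_congr rfl this, Finset.sum_ite_eq' (range (n+1)) 0 (fun _ => coeff n 1)]
  simp

lemma sum_antidiagonal_range {M : Type*} [AddCommMonoid M] (n : ℕ) (F : ℕ → ℕ → M)
    (hF : ∀ u v, n < u + v → F u v = 0) :
    ∑ m ∈ range (n+1), ∑ x ∈ antidiagonal m, F x.1 x.2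
      = ∑ u ∈ range (n+1), ∑ v ∈ range (n+1), F u v := by
  classical
  set s : Finset (ℕ × ℕ) :=
    (range (n+1) ×ˢ range (n+1)).filter (fun x => x.1 + x.2 ≤ n) with hs
  have key : ∀ m ∈ range (n+1),
      ∑ x ∈ antidiagonal m, F x.1 x.2 = ∑ x ∈ s.filter (fun x => x.1 + x.2 = m), F x.1 x.2 := by
    intro m hm
    simp only [Finset.mem_range] at hm
    congr 1
    ext ⟨u, v⟩
    simp only [hs, Finset.HasAntidiagonal.mem_antidiagonal, Finset.mem_filter, Finset.mem_product,
      Finset.mem_range]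
    omega
  rw [Finset.sum_congr rfl key]
  rw [Finset.sum_fiberwise_of_maps_to (fun x hx => by
    simp only [hs, Finset.mem_filter, Finset.mem_product, Finset.mem_range] at hx
    simp only [Finset.mem_range]; omega)]
  rw [← Finset.sum_product']
  apply Finset.sum_subset
  · exact Finset.filter_subset _ _
  · intro x hx hx'
    simp only [hs, Finset.mem_filter, Finset.mem_product, Finset.mem_range] at hx hx'
    exact hF x.1 x.2 (by omega)

lemma fcomp_mul_left {g : PowerSeries R} (hg : constantCoeff g = 0) (f₁ f₂ : PowerSeries R) :
    fcomp (f₁ * f₂) g = fcomp f₁ g * fcomp f₂ g := by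
  ext n
  have hvan : ∀ u v, n < u + v →
      coeff u f₁ * coeff v f₂ * coeff n (g ^ (u+v)) = 0 := by
    intro u v huv
    rw [coeff_pow_eq_zero hg _ n huv, mul_zero]
  have LHS : coeff n (fcomp (f₁ * f₂) g)
      = ∑ u ∈ range (n+1), ∑ v ∈ range (n+1),
          coeff u f₁ * coeff v f₂ * coeff n (g ^ (u + v)) := by
    rw [coeff_fcomp]
    have : ∀ m ∈ range (n+1), coeff m (f₁ * f₂) * coeff n (g ^ m)
        = ∑ x ∈ antidiagonal m, coeff x.1 f₁ * coeff x.2 f₂ * coeff n (g ^ (x.1 + x.2)) := by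
      intro m hm
      rw [coeff_mul, Finset.sum_mul]
      apply Finset.sum_congr rfl
      intro x hx
      rw [Finset.HasAntidiagonal.mem_antidiagonal] at hx
      rw [hx]
    rw [Finset.sum_congr rfl this]
    exact sum_antidiagonal_range n _ hvan
  have RHS : coeff n (fcomp f₁ g * fcomp f₂ g)
      = ∑ u ∈ range (n+1), ∑ v ∈ range (n+1),
          coeff u f₁ * coeff v f₂ * coeff n (g ^ (u + v)) := by
    rw [coeff_mul]
    have : ∀ x ∈ antidiagonal n, coeff x.1 (fcomp f₁ g) * coeff x.2 (fcomp f₂ g)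
        = ∑ u ∈ range (n+1), ∑ v ∈ range (n+1),
            (coeff u f₁ * coeff x.1 (g^u)) * (coeff v f₂ * coeff x.2 (g^v)) := by
      rintro ⟨n1, n2⟩ hx
      rw [Finset.HasAntidiagonal.mem_antidiagonal] at hx
      rw [coeff_fcomp_ext hg f₁ n1 (n+1) (by omega), coeff_fcomp_ext hg f₂ n2 (n+1) (by omega),
        Finset.sum_mul_sum]
    rw [Finset.sum_congr rfl this, Finset.sum_comm]
    apply Finset.sum_congr rfl
    intro u hu
    rw [Finset.sum_comm]
    apply Finset.sum_congr rfl
    intro v hv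
    have : ∑ x ∈ antidiagonal n, coeff u f₁ * coeff x.1 (g^u) * (coeff v f₂ * coeff x.2 (g^v))
        = (coeff u f₁ * coeff v f₂) * ∑ x ∈ antidiagonal n, coeff x.1 (g^u) * coeff x.2 (g^v) := by
      rw [Finset.mul_sum]
      apply Finset.sum_congr rfl
      intro x hx
      ring
    rw [this, ← coeff_mul, ← pow_add, mul_assoc]
  rw [LHS, RHS]

lemma fcomp_pow_left {g : PowerSeries R} (hg : constantCoeff g = 0) (f : PowerSeries R) :
    ∀ r : ℕ, fcomp (f ^ r) g = (fcomp f g) ^ r := by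
  intro r
  induction r with
  | zero => simpa using fcomp_one_left g
  | succ r ih => rw [pow_succ, fcomp_mul_left hg, ih, pow_succ]

lemma fcomp_assoc (f g h : PowerSeries R) (hg : constantCoeff g = 0)
    (hh : constantCoeff h = 0) :
    fcomp (fcomp f g) h = fcomp f (fcomp g h) := by
  ext n
  rw [coeff_fcomp, coeff_fcomp]
  have lhs : ∀ m ∈ range (n+1), coeff m (fcomp f g) * coeff n (h ^ m)
      = ∑ r ∈ range (n+1), coeff r f * coeff m (g ^ r) * coeff n (h ^ m) := by
    intro m hm
    simp only [Finset.mem_range] at hm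
    rw [coeff_fcomp_ext hg f m (n+1) (by omega), Finset.sum_mul]
  have rhs : ∀ r ∈ range (n+1), coeff r f * coeff n ((fcomp g h) ^ r)
      = ∑ m ∈ range (n+1), coeff r f * (coeff m (g ^ r) * coeff n (h ^ m)) := by
    intro r hr
    rw [← fcomp_pow_left hh g r, coeff_fcomp, Finset.mul_sum]
  rw [Finset.sum_congr rfl lhs, Finset.sum_congr rfl rhs, Finset.sum_comm]
  apply Finset.sum_congr rfl
  intro r hr
  apply Finset.sum_congr rfl
  intro m hm
  ring

lemma constantCoeff_fit {f : PowerSeries R} (hf0 : constantCoeff f = 0) :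
    ∀ n, constantCoeff (fit f n) = 0
  | 0 => by simp [fit]
  | n + 1 => by rw [fit, constantCoeff_fcomp]; exact hf0

lemma fit_one (f : PowerSeries R) : fit f 1 = f := by
  show fcomp f (fit f 0) = f
  show fcomp f X = f
  exact fcomp_X_right f

lemma fit_add {f : PowerSeries R} (hf0 : constantCoeff f = 0) (a b : ℕ) :
    fit f (a + b) = fcomp (fit f a) (fit f b) := by
  induction a with
  | zero =>
    rw [Nat.zero_add, show fit f 0 = X from rfl, fcomp_X_left _ (constantCoeff_fit hf0 b)]
  | succ a ih =>
    have h1 : a + 1 + b = (a + b) + 1 := by omega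
    rw [h1]
    show fcomp f (fit f (a + b)) = fcomp (fcomp f (fit f a)) (fit f b)
    rw [ih, fcomp_assoc f (fit f a) (fit f b) (constantCoeff_fit hf0 a) (constantCoeff_fit hf0 b)]

lemma coeff_one_fcomp (f g : PowerSeries R) (hf0 : constantCoeff f = 0) :
    coeff 1 (fcomp f g) = coeff 1 f * coeff 1 g := by
  rw [coeff_fcomp]
  rw [Finset.sum_range_succ, Finset.sum_range_one]
  simp [coeff_zero_eq_constantCoeff, hf0, pow_one]

lemma coeff_one_fit {f : PowerSeries R} (hf0 : constantCoeff f = 0) :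
    ∀ n, coeff 1 (fit f n) = (coeff 1 f) ^ n
  | 0 => by simp [fit]
  | n + 1 => by
    show coeff 1 (fcomp f (fit f n)) = _
    rw [coeff_one_fcomp f _ hf0, coeff_one_fit hf0 n, pow_succ, mul_comm]

lemma coeff_leading_pow {u : PowerSeries R} (hu0 : constantCoeff u = 0) :
    ∀ m, coeff m (u ^ m) = (coeff 1 u) ^ m
  | 0 => by simp
  | m + 1 => by
    rw [pow_succ, coeff_mul]
    have key : ∀ x ∈ antidiagonal (m+1), coeff x.1 (u^m) * coeff x.2 u
        = if x = (m, 1) then (coeff 1 u)^m * coeff 1 u else 0 := by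
      rintro ⟨r, j⟩ hx
      rw [Finset.HasAntidiagonal.mem_antidiagonal] at hx
      by_cases h : (r, j) = (m, (1:ℕ))
      · rw [if_pos h]
        rw [Prod.mk.injEq] at h
        rw [h.1, h.2, coeff_leading_pow hu0 m]
      · rw [if_neg h]
        rcases lt_or_ge r m with hr | hr
        · rw [coeff_pow_eq_zero hu0 m r hr, zero_mul]
        · have hj : j = 0 := by
            rw [Prod.mk.injEq] at h
            simp only [Prod.mk.injEq] at hx ⊢
            omega
          rw [hj, coeff_zero_eq_constantCoeff, hu0, mul_zero]
    rw [Finset.sum_congr rfl key, Finset.sum_ite_eq' (antidiagonal (m+1)) (m, 1)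
      (fun _ => (coeff 1 u)^m * coeff 1 u)]
    rw [if_pos (by rw [Finset.HasAntidiagonal.mem_antidiagonal])]
    rw [pow_succ]

end Formal

section Normed

open IsUltrametricDist

variable {K : Type*} [NontriviallyNormedField K] [IsUltrametricDist K]

lemma norm_coeff_pow_le_one {u : PowerSeries K} (hu : ∀ j, ‖coeff j u‖ ≤ 1) :
    ∀ m j, ‖coeff j (u ^ m)‖ ≤ 1 := by
  intro m
  induction m with
  | zero =>
    intro j
    rw [pow_zero, coeff_one]
    split <;> simp
  | succ m ih =>
    intro j
    rw [pow_succ, coeff_mul]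
    apply norm_sum_le_of_forall_le_of_nonneg zero_le_one
    intro x hx
    rw [norm_mul]
    exact mul_le_one₀ (ih x.1) (norm_nonneg _) (hu x.2)

lemma norm_coeff_fcomp_le_one {f u : PowerSeries K} (hf : ∀ j, ‖coeff j f‖ ≤ 1)
    (hu : ∀ j, ‖coeff j u‖ ≤ 1) : ∀ j, ‖coeff j (fcomp f u)‖ ≤ 1 := by
  intro j
  rw [coeff_fcomp]
  apply norm_sum_le_of_forall_le_of_nonneg zero_le_one
  intro m hm
  rw [norm_mul]
  exact mul_le_one₀ (hf m) (norm_nonneg _) (norm_coeff_pow_le_one hu m j)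

lemma norm_coeff_fit_le_one {f : PowerSeries K} (hf : ∀ j, ‖coeff j f‖ ≤ 1) :
    ∀ n j, ‖coeff j (fit f n)‖ ≤ 1
  | 0 => by
    intro j
    rw [show fit f 0 = (X : PowerSeries K) from rfl, coeff_X]
    split <;> simp
  | n + 1 => norm_coeff_fcomp_le_one hf (norm_coeff_fit_le_one hf n)

/-- `w` is `(θ, A)`-small: zero constant term and `‖w_{i+1}‖ θ^i ≤ A` for all `i`. -/
def Sm (θ A : ℝ) (w : PowerSeries K) : Prop :=
  constantCoeff w = 0 ∧ ∀ i : ℕ, ‖coeff (i+1) w‖ * θ^i ≤ A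

lemma Sm.mono {θ A B : ℝ} {w : PowerSeries K} (h : Sm θ A w) (hAB : A ≤ B) : Sm θ B w :=
  ⟨h.1, fun i => (h.2 i).trans hAB⟩

lemma Sm.zero {θ A : ℝ} (hA : 0 ≤ A) : Sm θ A (0 : PowerSeries K) :=
  ⟨by simp, fun i => by simp [hA]⟩

lemma Sm.add {θ A : ℝ} {w v : PowerSeries K} (hw : Sm θ A w) (hv : Sm θ A v) (hθ : 0 ≤ θ) :
    Sm θ A (w + v) := by
  refine ⟨by simp [hw.1, hv.1], fun i => ?_⟩
  have h1 : ‖coeff (i+1) (w + v)‖ ≤ max ‖coeff (i+1) w‖ ‖coeff (i+1) v‖ := by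
    rw [map_add]
    exact norm_add_le_max _ _
  have h2 : 0 ≤ θ^i := pow_nonneg hθ i
  calc ‖coeff (i+1) (w+v)‖ * θ^i
      ≤ max ‖coeff (i+1) w‖ ‖coeff (i+1) v‖ * θ^i := by
        exact mul_le_mul_of_nonneg_right h1 h2
    _ = max (‖coeff (i+1) w‖ * θ^i) (‖coeff (i+1) v‖ * θ^i) := by
        rw [max_mul_of_nonneg _ _ h2]
    _ ≤ A := max_le (hw.2 i) (hv.2 i)

lemma Sm.sum {θ A : ℝ} {ι : Type*} (s : Finset ι) (F : ι → PowerSeries K)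
    (hθ : 0 ≤ θ) (hA : 0 ≤ A) (h : ∀ i ∈ s, Sm θ A (F i)) :
    Sm θ A (∑ i ∈ s, F i) := by
  classical
  induction s using Finset.induction_on with
  | empty => simpa using Sm.zero hA
  | @insert a t hx ih =>
    rw [Finset.sum_insert hx]
    exact Sm.add (h a (Finset.mem_insert_self a t))
      (ih fun i hi => h i (Finset.mem_insert_of_mem hi)) hθ

lemma Sm.nsmul {θ A : ℝ} {w : PowerSeries K} (hθ : 0 ≤ θ) (hw : Sm θ A w) (hA : 0 ≤ A) (c : ℕ) :
    Sm θ A (c • w) := by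
  refine ⟨by simp [hw.1], fun i => ?_⟩
  have : coeff (i+1) (c • w) = (c : K) * coeff (i+1) w := by
    rw [map_nsmul, nsmul_eq_mul]
  rw [this, norm_mul]
  calc ‖(c : K)‖ * ‖coeff (i+1) w‖ * θ^i
      ≤ 1 * (‖coeff (i+1) w‖ * θ^i) := by
        rw [mul_assoc]
        exact mul_le_mul_of_nonneg_right (norm_natCast_le_one K c)
          (mul_nonneg (norm_nonneg _) (pow_nonneg hθ i))
    _ = ‖coeff (i+1) w‖ * θ^i := one_mul _
    _ ≤ A := hw.2 i

lemma Sm.norm_coeff_le {θ A : ℝ} {w : PowerSeries K} (hw : Sm θ A w) (hθ : 0 < θ) :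
    ∀ j : ℕ, ‖coeff j w‖ * θ^j ≤ A * θ := by
  intro j
  cases j with
  | zero =>
    rw [coeff_zero_eq_constantCoeff, hw.1]
    simp only [norm_zero, zero_mul]
    have := hw.2 0
    have h0 : 0 ≤ ‖coeff 1 w‖ * θ^0 := by positivity
    nlinarith [hw.2 0]
  | succ i =>
    rw [pow_succ, ← mul_assoc]
    exact mul_le_mul_of_nonneg_right (hw.2 i) hθ.le

lemma Sm.pow {θ A : ℝ} {w : PowerSeries K} (hw : Sm θ A w) (hθ : 0 < θ) (hA : 0 ≤ A) :
    ∀ s j, ‖coeff j (w ^ s)‖ * θ^j ≤ (A * θ)^s := by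
  intro s
  induction s with
  | zero =>
    intro j
    rw [pow_zero, coeff_one, pow_zero]
    split
    · rename_i h; subst h; simp
    · simp [pow_nonneg hθ.le]

  | succ s ih =>
    intro j
    rw [pow_succ, coeff_mul]
    have key : ∀ x ∈ Finset.HasAntidiagonal.antidiagonal j,
        ‖coeff x.1 (w^s) * coeff x.2 w‖ ≤ (A*θ)^(s+1) / θ^j := by
      rintro ⟨r, t⟩ hx
      rw [Finset.HasAntidiagonal.mem_antidiagonal] at hx
      rw [norm_mul, le_div_iff₀ (by positivity)]
      calc ‖coeff r (w^s)‖ * ‖coeff t w‖ * θ^j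
          = (‖coeff r (w^s)‖ * θ^r) * (‖coeff t w‖ * θ^t) := by
            rw [← hx, pow_add]; ring
        _ ≤ (A*θ)^s * (A*θ) := by
            apply mul_le_mul (ih r) (hw.norm_coeff_le hθ t) (by positivity) (by positivity)
        _ = (A*θ)^(s+1) := by rw [pow_succ]
    have hsum := norm_sum_le_of_forall_le_of_nonneg (by positivity) key
    calc ‖∑ x ∈ Finset.HasAntidiagonal.antidiagonal j, coeff x.1 (w^s) * coeff x.2 w‖ * θ^j
        ≤ ((A*θ)^(s+1) / θ^j) * θ^j := mul_le_mul_of_nonneg_right hsum (by positivity)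
      _ = (A*θ)^(s+1) := div_mul_cancel₀ _ (by positivity)

lemma Sm.delta {θ A B : ℝ} {w e : PowerSeries K} (hθ0 : 0 < θ) (hθ1 : θ ≤ 1)
    (hA : 0 ≤ A) (hB0 : 0 ≤ B) (hB1 : B ≤ 1) (hw : Sm θ A w) (he : Sm θ B e) :
    Sm θ (A*B) (fcomp w (X + e) - w) := by
  have hg0 : constantCoeff (X + e : PowerSeries K) = 0 := by
    rw [map_add, constantCoeff_X, he.1, add_zero]
  constructor
  · rw [map_sub, constantCoeff_fcomp, hw.1, sub_zero]
  intro i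
  set N := i + 1 with hN
  -- the binomial expansion of the m-th power
  have hbin : ∀ m : ℕ, coeff N ((X + e)^m) - coeff N ((X:PowerSeries K)^m)
      = ∑ s ∈ Finset.range m,
          coeff N (e^(s+1) * X^(m-(s+1))) * ((m.choose (s+1) : K)) := by
    intro m
    rw [add_comm (X : PowerSeries K) e, add_pow, map_sum]
    have : ∀ s ∈ Finset.range (m+1),
        coeff N (e^s * (X:PowerSeries K)^(m-s) * ((s.choose 0 * m.choose s : ℕ) : PowerSeries K))
          = coeff N (e^s * X^(m-s)) * ((m.choose s : K)) := by
      intro s hs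
      rw [← map_natCast C (s.choose 0 * m.choose s), coeff_mul_C]
      simp
    rw [Finset.sum_congr rfl (fun s hs => by
      rw [← map_natCast C (m.choose s), coeff_mul_C])]
    rw [Finset.sum_range_succ']
    simp only [pow_zero, one_mul, Nat.sub_zero, Nat.choose_zero_right, Nat.cast_one, mul_one]
    ring
  have hxpow : ∀ m ∈ Finset.range (N+1), coeff m w * coeff N ((X:PowerSeries K)^m)
      = if m = N then coeff N w else 0 := by
    intro m hm
    rw [coeff_X_pow]
    by_cases h : m = N
    · subst h; simp
    · simp [h, Ne.symm h]
  have hsplit : coeff N (fcomp w (X + e) - w)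
      = ∑ m ∈ Finset.range (N+1), coeff m w *
          (∑ s ∈ Finset.range m, coeff N (e^(s+1) * X^(m-(s+1))) * ((m.choose (s+1) : K))) := by
    rw [map_sub, coeff_fcomp]
    have : ∑ m ∈ Finset.range (N+1), coeff m w * coeff N ((X+e)^m)
        = ∑ m ∈ Finset.range (N+1), (coeff m w * coeff N ((X:PowerSeries K)^m)
            + coeff m w * (∑ s ∈ Finset.range m,
              coeff N (e^(s+1) * X^(m-(s+1))) * ((m.choose (s+1) : K)))) := by
      apply Finset.sum_congr rfl
      intro m hm
      rw [← hbin m]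
      ring
    rw [this, Finset.sum_add_distrib, Finset.sum_congr rfl hxpow,
      Finset.sum_ite_eq' (Finset.range (N+1)) N (fun _ => coeff N w)]
    rw [if_pos (by simp [hN])]
    ring
  rw [hsplit]
  have big : ‖∑ m ∈ Finset.range (N+1), coeff m w *
      (∑ s ∈ Finset.range m, coeff N (e^(s+1) * X^(m-(s+1))) * ((m.choose (s+1) : K)))‖
        ≤ (A*B) / θ^i := by
    apply norm_sum_le_of_forall_le_of_nonneg (by positivity)
    intro m hm
    rw [Finset.mul_sum]
    apply norm_sum_le_of_forall_le_of_nonneg (by positivity)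
    intro s hs
    simp only [Finset.mem_range] at hm hs
    obtain ⟨m', rfl⟩ : ∃ m', m = m' + 1 := ⟨m - 1, by omega⟩
    rw [coeff_mul_X_pow']
    split_ifs with hle
    · set σ := s + 1 with hσ
      set j := N - (m' + 1 - σ) with hj
      have h1 : ‖coeff (m'+1) w‖ * θ^m' ≤ A := hw.2 m'
      have h2 : ‖coeff j (e^σ)‖ * θ^j ≤ (B*θ)^σ := he.pow hθ0 hB0 σ j
      have hCle : ‖(((m'+1).choose σ : ℕ) : K)‖ ≤ 1 := norm_natCast_le_one K _
      have hm'j : m' + j = i + σ := by omega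
      have key : ‖coeff (m'+1) w‖ * ‖coeff j (e^σ)‖ * θ^i ≤ A * B^σ := by
        have hp : θ^m' * θ^j = θ^i * θ^σ := by rw [← pow_add, ← pow_add, hm'j]
        have h3 : (‖coeff (m'+1) w‖*θ^m') * (‖coeff j (e^σ)‖*θ^j) ≤ A * (B*θ)^σ :=
          mul_le_mul h1 h2 (by positivity) hA
        have h4 : (‖coeff (m'+1) w‖ * ‖coeff j (e^σ)‖ * θ^i) * θ^σ ≤ (A*B^σ) * θ^σ := by
          calc (‖coeff (m'+1) w‖ * ‖coeff j (e^σ)‖ * θ^i) * θ^σ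
              = ‖coeff (m'+1) w‖ * ‖coeff j (e^σ)‖ * (θ^i * θ^σ) := by ring
            _ = ‖coeff (m'+1) w‖ * ‖coeff j (e^σ)‖ * (θ^m' * θ^j) := by rw [hp]
            _ = (‖coeff (m'+1) w‖*θ^m') * (‖coeff j (e^σ)‖*θ^j) := by ring
            _ ≤ A*(B*θ)^σ := h3
            _ = (A*B^σ)*θ^σ := by rw [mul_pow]; ring
        exact le_of_mul_le_mul_right h4 (by positivity)
      have hBσ : B^σ ≤ B := by
        calc B^σ ≤ B^1 := pow_le_pow_of_le_one hB0 hB1 (by omega)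
          _ = B := pow_one B
      rw [norm_mul, norm_mul, le_div_iff₀ (by positivity)]
      calc ‖coeff (m'+1) w‖ * (‖coeff j (e^σ)‖ * ‖(((m'+1).choose σ : ℕ) : K)‖) * θ^i
          ≤ ‖coeff (m'+1) w‖ * (‖coeff j (e^σ)‖ * 1) * θ^i := by gcongr
        _ = ‖coeff (m'+1) w‖ * ‖coeff j (e^σ)‖ * θ^i := by ring
        _ ≤ A * B^σ := key
        _ ≤ A * B := mul_le_mul_of_nonneg_left hBσ hA
    · simp only [zero_mul, mul_zero, norm_zero]
      positivity
  calc ‖∑ m ∈ Finset.range (N+1), coeff m w *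
      (∑ s ∈ Finset.range m, coeff N (e^(s+1) * X^(m-(s+1))) * ((m.choose (s+1) : K)))‖ * θ^i
      ≤ ((A*B) / θ^i) * θ^i := mul_le_mul_of_nonneg_right big (by positivity)
    _ = A*B := div_mul_cancel₀ _ (by positivity)

/-- Ultrametric bound for a sum with all terms bounded. -/
lemma norm_sum_le' {ι : Type*} {s : Finset ι} {F : ι → K} {C : ℝ} (hC : 0 ≤ C)
    (h : ∀ x ∈ s, ‖F x‖ ≤ C) : ‖∑ x ∈ s, F x‖ ≤ C :=
  norm_sum_le_of_forall_le_of_nonneg hC h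

lemma lemma1 (lam : K) (hlam : ‖lam‖ = 1) (q : ℕ)
    (hq2' : ∀ j, 0 < j → j < q → ‖lam ^ j - 1‖ = 1)
    (f g : PowerSeries K) (hf : ∀ m, ‖coeff m f‖ ≤ 1) (hf0 : constantCoeff f = 0)
    (hf1 : coeff 1 f = lam) (hg : ∀ m, ‖coeff m g‖ ≤ 1) (hg0 : constantCoeff g = 0)
    (hg1 : coeff 1 g = lam ^ q) (hδ1 : ‖lam ^ q - 1‖ ≤ 1)
    (hcomm : fcomp f g = fcomp g f) :
    ∀ i, 2 ≤ i → i ≤ q → ‖coeff i g‖ ≤ ‖lam ^ q - 1‖ := by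
  set δ := ‖lam ^ q - 1‖ with hδdef
  have hδ0 : 0 ≤ δ := norm_nonneg _
  intro i
  induction i using Nat.strong_induction_on with
  | _ i IH =>
  intro hi2 hiq
  -- bounds on γ = g - X
  have hγsmall : ∀ j, j < i → ‖coeff j (g - X)‖ ≤ δ := by
    intro j hj
    rcases Nat.eq_zero_or_pos j with rfl | hj0
    · rw [coeff_zero_eq_constantCoeff, map_sub, hg0, constantCoeff_X, sub_zero, norm_zero]
      exact hδ0
    rcases Nat.lt_or_ge j 2 with hj1 | hj2
    · have : j = 1 := by omega
      subst this
      rw [map_sub, hg1, coeff_X, if_pos rfl]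
    · have : coeff j (g - X) = coeff j g := by
        rw [map_sub, coeff_X, if_neg (by omega), sub_zero]
      rw [this]
      exact IH j hj hj2 (by omega)
  have hγall : ∀ j, ‖coeff j (g - X)‖ ≤ 1 := by
    intro j
    rcases Nat.eq_zero_or_pos j with rfl | hj0
    · rw [coeff_zero_eq_constantCoeff, map_sub, hg0, constantCoeff_X, sub_zero, norm_zero]
      exact zero_le_one
    by_cases hj1 : j = 1
    · subst hj1
      rw [map_sub, hg1, coeff_X, if_pos rfl]
      exact hδ1
    · have : coeff j (g - X) = coeff j g := by
        rw [map_sub, coeff_X, if_neg hj1, sub_zero]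
      rw [this]; exact hg j
  -- the power claim
  have hQ : ∀ m, 1 ≤ m → ∀ t, t ≤ (i - 1) + (m - 1) →
      ‖coeff t (g ^ m) - (if t = m then 1 else 0)‖ ≤ δ := by
    intro m
    induction m with
    | zero => omega
    | succ m ihm =>
      intro _ t ht
      rcases Nat.eq_zero_or_pos m with rfl | hm1
      · -- m + 1 = 1
        have h1 : coeff t (g ^ 1) - (if t = 1 then 1 else 0) = coeff t (g - X) := by
          rw [pow_one, map_sub, coeff_X]
        rw [h1]
        exact hγsmall t (by omega)
      · -- inductive step
        rcases Nat.eq_zero_or_pos t with rfl | ht0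
        · rw [coeff_pow_eq_zero hg0 (m+1) 0 (by omega), if_neg (by omega), sub_zero, norm_zero]
          exact hδ0
        have hsplit : (g : PowerSeries K) ^ (m+1) = g^m * X + g^m * (g - X) := by
          ring
        have h1 : coeff t (g^m * X) = coeff (t-1) (g^m) := by
          rw [show (X : PowerSeries K) = X^1 by rw [pow_one], coeff_mul_X_pow', if_pos (by omega)]
        have h2 : ‖coeff t (g^m * (g - X))‖ ≤ δ := by
          rw [coeff_mul]
          apply norm_sum_le' hδ0
          rintro ⟨r, u⟩ hx
          rw [Finset.HasAntidiagonal.mem_antidiagonal] at hx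
          rcases Nat.lt_or_ge r m with hr | hr
          · rw [coeff_pow_eq_zero hg0 m r hr, zero_mul, norm_zero]; exact hδ0
          · have hu : u < i := by omega
            calc ‖coeff r (g^m) * coeff u (g - X)‖
                = ‖coeff r (g^m)‖ * ‖coeff u (g - X)‖ := norm_mul _ _
              _ ≤ 1 * δ := mul_le_mul (norm_coeff_pow_le_one hg m r) (hγsmall u hu)
                  (norm_nonneg _) zero_le_one
              _ = δ := one_mul δ
        have heq : coeff t (g^(m+1)) - (if t = m+1 then 1 else 0)
            = (coeff (t-1) (g^m) - (if t-1 = m then 1 else 0)) + coeff t (g^m * (g-X)) := by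
          rw [hsplit, map_add, h1]
          have : (if t = m + 1 then (1:K) else 0) = (if t - 1 = m then 1 else 0) := by
            congr 1
            simp only [eq_iff_iff]
            omega
          rw [this]
          ring
        rw [heq]
        calc ‖(coeff (t-1) (g^m) - (if t-1 = m then 1 else 0)) + coeff t (g^m * (g-X))‖
            ≤ max ‖coeff (t-1) (g^m) - (if t-1 = m then 1 else 0)‖ ‖coeff t (g^m * (g-X))‖ :=
              norm_add_le_max _ _
          _ ≤ δ := max_le (ihm hm1 (t-1) (by omega)) h2
  -- assemble via the commutation identity
  have hLHS : ‖coeff i (fcomp f g) - (lam * coeff i g + coeff i f)‖ ≤ δ := by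
    rw [coeff_fcomp]
    have hpt : ∀ m ∈ Finset.range (i+1), coeff m f * coeff i (g^m)
        = ((if m = 1 then lam * coeff i g else 0) + (if m = i then coeff i f else 0))
          + (if 2 ≤ m then coeff m f * (coeff i (g^m) - (if i = m then 1 else 0)) else 0) := by
      intro m hm
      rcases Nat.eq_zero_or_pos m with rfl | hm0
      · rw [coeff_zero_eq_constantCoeff, hf0, if_neg (by omega), if_neg (by omega),
          if_neg (by omega)]
        ring
      by_cases hm1 : m = 1
      · subst hm1
        rw [if_pos rfl, if_neg (by omega), if_neg (by omega), pow_one, hf1]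
        ring
      · have hm2 : 2 ≤ m := by omega
        rw [if_neg hm1, if_pos hm2]
        by_cases hmi : m = i
        · subst hmi
          rw [if_pos rfl, if_pos rfl]
          ring
        · rw [if_neg hmi, if_neg (by omega : ¬ i = m)]
          ring
    rw [Finset.sum_congr rfl hpt, Finset.sum_add_distrib, Finset.sum_add_distrib,
      Finset.sum_ite_eq' (Finset.range (i+1)) 1 (fun _ => lam * coeff i g),
      Finset.sum_ite_eq' (Finset.range (i+1)) i (fun _ => coeff i f),
      if_pos (by simp only [Finset.mem_range]; omega),
      if_pos (by simp only [Finset.mem_range]; omega)]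
    have hE : ‖∑ m ∈ Finset.range (i+1),
        (if 2 ≤ m then coeff m f * (coeff i (g^m) - (if i = m then 1 else 0)) else 0)‖ ≤ δ := by
      apply norm_sum_le' hδ0
      intro m hm
      by_cases hm2 : 2 ≤ m
      · rw [if_pos hm2, norm_mul]
        calc ‖coeff m f‖ * ‖coeff i (g^m) - (if i = m then 1 else 0)‖
            ≤ 1 * δ := mul_le_mul (hf m) (hQ m (by omega) i (by omega)) (norm_nonneg _) zero_le_one
          _ = δ := one_mul δ
      · rw [if_neg hm2, norm_zero]; exact hδ0
    calc ‖lam * coeff i g + coeff i f + (∑ m ∈ Finset.range (i+1),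
          (if 2 ≤ m then coeff m f * (coeff i (g^m) - (if i = m then 1 else 0)) else 0))
          - (lam * coeff i g + coeff i f)‖
        = ‖∑ m ∈ Finset.range (i+1),
          (if 2 ≤ m then coeff m f * (coeff i (g^m) - (if i = m then 1 else 0)) else 0)‖ := by
          congr 1; ring
      _ ≤ δ := hE
  have hRHS : ‖coeff i (fcomp g f) - (lam^q * coeff i f + lam^i * coeff i g)‖ ≤ δ := by
    rw [coeff_fcomp]
    have hpt : ∀ m ∈ Finset.range (i+1), coeff m g * coeff i (f^m)
        = ((if m = 1 then lam^q * coeff i f else 0)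
            + (if m = i then lam^i * coeff i g else 0))
          + (if 2 ≤ m ∧ m ≠ i then coeff m g * coeff i (f^m) else 0) := by
      intro m hm
      rcases Nat.eq_zero_or_pos m with rfl | hm0
      · rw [coeff_zero_eq_constantCoeff, hg0, if_neg (by omega), if_neg (by omega),
          if_neg (by simp)]
        ring
      by_cases hm1 : m = 1
      · subst hm1
        rw [if_pos rfl, if_neg (by omega), if_neg (by omega), pow_one, hg1]
        ring
      · have hm2 : 2 ≤ m := by omega
        by_cases hmi : m = i
        · subst hmi
          rw [if_neg hm1, if_pos rfl, if_neg (by simp), coeff_leading_pow hf0, hf1]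
          ring
        · rw [if_neg hm1, if_neg hmi, if_pos ⟨hm2, hmi⟩]
          ring
    rw [Finset.sum_congr rfl hpt, Finset.sum_add_distrib, Finset.sum_add_distrib,
      Finset.sum_ite_eq' (Finset.range (i+1)) 1 (fun _ => lam^q * coeff i f),
      Finset.sum_ite_eq' (Finset.range (i+1)) i (fun _ => lam^i * coeff i g),
      if_pos (by simp only [Finset.mem_range]; omega),
      if_pos (by simp only [Finset.mem_range]; omega)]
    have hE : ‖∑ m ∈ Finset.range (i+1),
        (if 2 ≤ m ∧ m ≠ i then coeff m g * coeff i (f^m) else 0)‖ ≤ δ := by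
      apply norm_sum_le' hδ0
      intro m hm
      simp only [Finset.mem_range] at hm
      by_cases hm2 : 2 ≤ m ∧ m ≠ i
      · rw [if_pos hm2, norm_mul]
        calc ‖coeff m g‖ * ‖coeff i (f^m)‖
            ≤ δ * 1 := mul_le_mul (IH m (by omega) (by omega) (by omega))
              (norm_coeff_pow_le_one hf m i) (norm_nonneg _) hδ0
          _ = δ := mul_one δ
      · rw [if_neg hm2, norm_zero]; exact hδ0
    calc ‖lam^q * coeff i f + lam^i * coeff i g + (∑ m ∈ Finset.range (i+1),
          (if 2 ≤ m ∧ m ≠ i then coeff m g * coeff i (f^m) else 0))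
          - (lam^q * coeff i f + lam^i * coeff i g)‖
        = ‖∑ m ∈ Finset.range (i+1),
          (if 2 ≤ m ∧ m ≠ i then coeff m g * coeff i (f^m) else 0)‖ := by
          congr 1; ring
      _ ≤ δ := hE
  have hdiff : ‖(lam * coeff i g + coeff i f)
      - (lam^q * coeff i f + lam^i * coeff i g)‖ ≤ δ := by
    have heq : (lam * coeff i g + coeff i f)
        - (lam^q * coeff i f + lam^i * coeff i g)
        = (coeff i (fcomp g f) - (lam^q * coeff i f + lam^i * coeff i g))
          - (coeff i (fcomp f g) - (lam * coeff i g + coeff i f)) := by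
      rw [hcomm]; ring
    rw [heq, sub_eq_add_neg]
    calc ‖(coeff i (fcomp g f) - (lam^q * coeff i f + lam^i * coeff i g))
        + -(coeff i (fcomp f g) - (lam * coeff i g + coeff i f))‖
        ≤ max ‖coeff i (fcomp g f) - (lam^q * coeff i f + lam^i * coeff i g)‖
            ‖-(coeff i (fcomp f g) - (lam * coeff i g + coeff i f))‖ := norm_add_le_max _ _
      _ ≤ δ := by
          rw [norm_neg]
          exact max_le hRHS hLHS
  have hpi : lam ^ i = lam * lam^(i-1) := by
    conv_lhs => rw [show i = (i-1)+1 by omega]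
    rw [pow_succ']
  have h5 : ‖coeff i g * (lam * (1 - lam^(i-1)))‖ ≤ δ := by
    have heq2 : coeff i g * (lam * (1 - lam^(i-1)))
        = ((lam * coeff i g + coeff i f)
            - (lam^q * coeff i f + lam^i * coeff i g))
          + (lam^q - 1) * coeff i f := by
      rw [hpi]; ring
    rw [heq2]
    calc ‖((lam * coeff i g + coeff i f)
            - (lam^q * coeff i f + lam^i * coeff i g)) + (lam^q - 1) * coeff i f‖
        ≤ max ‖(lam * coeff i g + coeff i f)
            - (lam^q * coeff i f + lam^i * coeff i g)‖ ‖(lam^q - 1) * coeff i f‖ :=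
          norm_add_le_max _ _
      _ ≤ δ := by
          apply max_le hdiff
          rw [norm_mul]
          calc ‖lam^q - 1‖ * ‖coeff i f‖ ≤ δ * 1 :=
              mul_le_mul le_rfl (hf i) (norm_nonneg _) hδ0
            _ = δ := mul_one δ
  have hunit : ‖lam * (1 - lam^(i-1))‖ = 1 := by
    rw [norm_mul, hlam, one_mul, ← norm_neg, neg_sub]
    exact hq2' (i-1) (by omega) (by omega)
  rw [norm_mul, hunit, mul_one] at h5
  exact h5

lemma hasSum_norm_le {v : ℕ → K} {s : K} (h : HasSum v s) {C : ℝ} (hC : 0 ≤ C)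
    (hv : ∀ m, ‖v m‖ ≤ C) : ‖s‖ ≤ C := by
  have ht := h.tendsto_sum_nat.norm
  apply le_of_tendsto ht
  filter_upwards with n
  exact norm_sum_le' hC (fun x _ => hv x)

/-- The Newton-polygon contradiction: a dominant linear coefficient prevents a zero. -/
lemma newton {w : PowerSeries K} {z₀ : K} (h0 : constantCoeff w = 0)
    {C : ℝ} (hC0 : 0 ≤ C) (hlt : C < ‖coeff 1 w * z₀ ^ 1‖)
    (hb : ∀ m, 2 ≤ m → ‖coeff m w * z₀ ^ m‖ ≤ C)
    (hs : HasSum (fun m : ℕ => coeff m w * z₀ ^ m) 0) : False := by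
  classical
  set t : ℕ → K := fun m => coeff m w * z₀ ^ m with ht
  have hup : HasSum (Function.update t 1 0) (0 - t 1 + 0) := hs.update 1 0
  have hbound : ∀ m, ‖Function.update t 1 0 m‖ ≤ C := by
    intro m
    by_cases hm : m = 1
    · subst hm; rw [Function.update_self, norm_zero]; exact hC0
    · rw [Function.update_of_ne hm]
      rcases Nat.eq_zero_or_pos m with rfl | hm0
      · have : t 0 = 0 := by
          rw [ht]
          simp only [pow_zero, mul_one]
          rw [coeff_zero_eq_constantCoeff, h0]
        rw [this, norm_zero]; exact hC0
      · exact hb m (by omega)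
  have hC1 : ‖(0:K) - t 1 + 0‖ ≤ C := hasSum_norm_le hup hC0 hbound
  rw [add_zero, zero_sub, norm_neg] at hC1
  exact absurd hC1 (not_le.mpr hlt)

lemma norm_natCast_eq_one {p : ℕ} (hp : p.Prime) [CharP K p] {k : ℕ} (hpk : ¬ p ∣ k) :
    ‖(k : K)‖ = 1 := by
  haveI : Fact p.Prime := ⟨hp⟩
  have hx : (k : ZMod p) ≠ 0 := by
    rwa [Ne, ZMod.natCast_eq_zero_iff]
  have hx1 : (k : ZMod p) ^ (p - 1) = 1 := ZMod.pow_card_sub_one_eq_one hx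
  have hcast : ((ZMod.castHom dvd_rfl K) (k : ZMod p)) = (k : K) := by
    simp [map_natCast]
  have hpow : ((k : K)) ^ (p - 1) = 1 := by
    rw [← hcast, ← map_pow, hx1, map_one]
  have hnorm : ‖(k : K)‖ ^ (p-1) = 1 := by
    rw [← norm_pow, hpow, norm_one]
  have hnn : 0 ≤ ‖(k : K)‖ := norm_nonneg _
  have hp1 : p - 1 ≠ 0 := by have := hp.one_lt; omega
  rcases lt_trichotomy ‖(k : K)‖ 1 with h | h | h
  · exact absurd hnorm (by
      have := pow_lt_one₀ hnn h hp1
      intro hcontr; rw [hcontr] at this; exact lt_irrefl 1 this)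
  · exact h
  · exact absurd hnorm (by
      have := one_lt_pow₀ h hp1
      intro hcontr; rw [hcontr] at this; exact lt_irrefl 1 this)

section LamNorm

variable {lam : K} {q : ℕ}

lemma norm_pow_sub_one_le_one (hlam : ‖lam‖ = 1) (j : ℕ) : ‖lam ^ j - 1‖ ≤ 1 := by
  rw [sub_eq_add_neg]
  calc ‖lam^j + (-1 : K)‖ ≤ max ‖lam^j‖ ‖(-1:K)‖ := norm_add_le_max _ _
    _ ≤ 1 := by
      apply max_le
      · rw [norm_pow, hlam, one_pow]
      · rw [norm_neg, norm_one]

lemma norm_pow_q_sub_one_le (hlam : ‖lam‖ = 1) (c : ℕ) :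
    ‖(lam^q)^c - 1‖ ≤ ‖lam^q - 1‖ := by
  have hgeom := geom_sum_mul (lam^q) c
  rw [← hgeom, norm_mul]
  have hS : ‖∑ i ∈ Finset.range c, (lam^q)^i‖ ≤ 1 := by
    apply norm_sum_le' zero_le_one
    intro i hi
    rw [← pow_mul, norm_pow, hlam, one_pow]
  calc ‖∑ i ∈ Finset.range c, (lam^q)^i‖ * ‖lam^q - 1‖ ≤ 1 * ‖lam^q - 1‖ :=
      mul_le_mul_of_nonneg_right hS (norm_nonneg _)
    _ = ‖lam^q - 1‖ := one_mul _

lemma norm_pow_sub_one_eq_one (hlam : ‖lam‖ = 1) (hδ1 : ‖lam^q - 1‖ < 1)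
    (hq2' : ∀ j, 0 < j → j < q → ‖lam ^ j - 1‖ = 1) (hq0 : 0 < q) {j : ℕ} (hj : ¬ q ∣ j) :
    ‖lam ^ j - 1‖ = 1 := by
  have hr0 : 0 < j % q := Nat.pos_of_ne_zero (fun h0 => hj (Nat.dvd_iff_mod_eq_zero.mpr h0))
  have hrq : j % q < q := Nat.mod_lt j hq0
  have hdecomp : lam ^ j - 1 = lam^(q*(j/q)) * (lam^(j % q) - 1) + (lam^(q*(j/q)) - 1) := by
    have : q * (j / q) + j % q = j := Nat.div_add_mod j q
    calc lam ^ j - 1 = lam^(q*(j/q) + j % q) - 1 := by rw [this]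
      _ = lam^(q*(j/q)) * lam^(j%q) - 1 := by rw [pow_add]
      _ = lam^(q*(j/q)) * (lam^(j % q) - 1) + (lam^(q*(j/q)) - 1) := by ring
  have hA : ‖lam^(q*(j/q)) * (lam^(j%q) - 1)‖ = 1 := by
    rw [norm_mul, norm_pow, hlam, one_pow, one_mul]
    exact hq2' _ hr0 hrq
  have hB : ‖lam^(q*(j/q)) - 1‖ < 1 := by
    calc ‖lam^(q*(j/q)) - 1‖ = ‖(lam^q)^(j/q) - 1‖ := by rw [← pow_mul]
      _ ≤ ‖lam^q - 1‖ := norm_pow_q_sub_one_le hlam _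
      _ < 1 := hδ1
  -- ultrametric: sum of something of norm 1 and something smaller has norm 1
  have hle : ‖lam ^ j - 1‖ ≤ 1 := norm_pow_sub_one_le_one hlam j
  have hge : 1 ≤ ‖lam ^ j - 1‖ := by
    by_contra hcontr
    push_neg at hcontr
    have : ‖lam^(q*(j/q)) * (lam^(j%q) - 1)‖ ≤ max ‖lam^j - 1‖ ‖lam^(q*(j/q)) - 1‖ := by
      have heq : lam^(q*(j/q)) * (lam^(j%q) - 1) = (lam^j - 1) + -(lam^(q*(j/q)) - 1) := by
        rw [hdecomp]; ring
      rw [heq]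
      calc ‖(lam^j - 1) + -(lam^(q*(j/q)) - 1)‖
          ≤ max ‖lam^j - 1‖ ‖-(lam^(q*(j/q)) - 1)‖ := norm_add_le_max _ _
        _ = max ‖lam^j - 1‖ ‖lam^(q*(j/q)) - 1‖ := by rw [norm_neg]
    rw [hA] at this
    have := le_max_iff.mp this
    rcases this with h | h
    · linarith
    · linarith
  linarith

end LamNorm

end Normed


/-- Let `K` be an ultrametric field of positive characteristic `p`, `λ ∈ K` with
`‖λ‖ = 1`, whose reduction has finite order `q` in the residue field, and `λ^q ≠ 1`.
Then for every `f(z) = λz + ⋯ ∈ O_K[[z]]`: there is `r > 0` bounding from below the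
absolute values of all periodic points of `f` in `m_K ∖ {0}`; in fact each such point
`z₀` satisfies `‖z₀‖ ≥ ‖λ^q - 1‖^((p-1)/(q p))` or `‖z₀‖ ≥ ‖λ^q - 1‖^(1/q)`.  In
particular the irrationally indifferent fixed point `z = 0` is isolated as a periodic
point. -/
theorem stmt6 {K : Type*} [NontriviallyNormedField K] [IsUltrametricDist K] [CompleteSpace K]
    (p : ℕ) (hp : p.Prime) [CharP K p]
    (lam : K) (hlam : ‖lam‖ = 1)
    (q : ℕ) (hq0 : 0 < q) (hq1 : ‖lam ^ q - 1‖ < 1)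
    (hq2 : ∀ j, 0 < j → j < q → ¬ ‖lam ^ j - 1‖ < 1)
    (hqne : lam ^ q ≠ 1)
    (f : PowerSeries K) (hf : ∀ m, ‖PowerSeries.coeff m f‖ ≤ 1)
    (hf0 : PowerSeries.constantCoeff f = 0) (hf1 : PowerSeries.coeff 1 f = lam) :
    (∃ r : ℝ, 0 < r ∧
      ∀ z₀ : K, ‖z₀‖ < 1 → z₀ ≠ 0 →
        (∃ ℓ : ℕ, 0 < ℓ ∧
          HasSum (fun m : ℕ => (PowerSeries.coeff m (fit f ℓ)) * z₀ ^ m) z₀) →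
        r ≤ ‖z₀‖) ∧
    ∀ z₀ : K, ‖z₀‖ < 1 → z₀ ≠ 0 →
      (∃ ℓ : ℕ, 0 < ℓ ∧
        HasSum (fun m : ℕ => (PowerSeries.coeff m (fit f ℓ)) * z₀ ^ m) z₀) →
      ‖lam ^ q - 1‖ ^ (((p : ℝ) - 1) / ((q : ℝ) * (p : ℝ))) ≤ ‖z₀‖ ∨
        ‖lam ^ q - 1‖ ^ ((1 : ℝ) / (q : ℝ)) ≤ ‖z₀‖ := by
  classical
  haveI : Fact p.Prime := ⟨hp⟩
  have hδne : lam ^ q - 1 ≠ 0 := sub_ne_zero.mpr hqne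
  set δ : ℝ := ‖lam ^ q - 1‖ with hδdef
  have hδpos : 0 < δ := norm_pos_iff.mpr hδne
  have hδ1 : δ < 1 := hq1
  set θ : ℝ := δ ^ ((1:ℝ)/(q:ℝ)) with hθdef
  have hq0' : (0:ℝ) < (q:ℝ) := by exact_mod_cast hq0
  have hθpos : 0 < θ := Real.rpow_pos_of_pos hδpos _
  have hθlt1 : θ < 1 := Real.rpow_lt_one hδpos.le hδ1 (by positivity)
  have hθq : θ ^ q = δ := by
    rw [hθdef, ← Real.rpow_natCast (δ ^ ((1:ℝ)/(q:ℝ))) q, ← Real.rpow_mul hδpos.le,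
      one_div, inv_mul_cancel₀ (ne_of_gt hq0'), Real.rpow_one]
  have hq2' : ∀ j, 0 < j → j < q → ‖lam ^ j - 1‖ = 1 := by
    intro j h1 h2
    exact le_antisymm (norm_pow_sub_one_le_one hlam j) (not_lt.mp (hq2 j h1 h2))
  -- coefficients of all iterates
  have hfitint : ∀ n j, ‖coeff j (fit f n)‖ ≤ 1 := norm_coeff_fit_le_one hf
  have hfit1 : ∀ n, coeff 1 (fit f n) = lam ^ n := by
    intro n
    rw [coeff_one_fit hf0 n, hf1]
  have key : ∀ z₀ : K, ‖z₀‖ < 1 → z₀ ≠ 0 →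
      (∃ ℓ : ℕ, 0 < ℓ ∧
        HasSum (fun m : ℕ => (PowerSeries.coeff m (fit f ℓ)) * z₀ ^ m) z₀) →
      θ ≤ ‖z₀‖ := by
    rintro z₀ hz1 hz0 ⟨ℓ, hℓ, hsum⟩
    by_contra hcon
    push_neg at hcon
    have hρpos : 0 < ‖z₀‖ := norm_pos_iff.mpr hz0
    set ρ := ‖z₀‖ with hρdef
    -- the fixed-point series W = fit f ℓ - X and its sum at z₀ is 0
    set W : PowerSeries K := fit f ℓ - X with hWdef
    have hsum' : HasSum (fun m : ℕ => coeff m W * z₀ ^ m) 0 := by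
      have hX : HasSum (fun m : ℕ => coeff m (X : PowerSeries K) * z₀ ^ m) z₀ := by
        have hfun : (fun m : ℕ => coeff m (X : PowerSeries K) * z₀ ^ m)
            = fun m : ℕ => if m = 1 then z₀ else 0 := by
          funext m
          rw [coeff_X]
          by_cases h : m = 1
          · subst h; simp
          · simp [h]
        rw [hfun]
        exact hasSum_ite_eq 1 z₀
      have := hsum.sub hX
      rw [sub_self] at this
      simpa only [hWdef, map_sub, sub_mul] using this
    have hW0 : constantCoeff W = 0 := by
      rw [hWdef, map_sub, constantCoeff_fit hf0, constantCoeff_X, sub_zero]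
    have hW1 : coeff 1 W = lam ^ ℓ - 1 := by
      rw [hWdef, map_sub, hfit1, coeff_X, if_pos rfl]
    have hWm : ∀ m, m ≠ 1 → coeff m W = coeff m (fit f ℓ) := by
      intro m hm
      rw [hWdef, map_sub, coeff_X, if_neg hm, sub_zero]
    by_cases hqdvd : q ∣ ℓ
    · -- hard case
      obtain ⟨m0, rfl⟩ := hqdvd
      have hm0 : m0 ≠ 0 := by rintro rfl; simp at hℓ
      set n := m0.factorization p with hn
      set k := m0 / p ^ n with hk
      have hkm : p ^ n * k = m0 := Nat.ordProj_mul_ordCompl_eq_self m0 p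
      have hpk : ¬ p ∣ k := Nat.not_dvd_ordCompl hp hm0
      have hk0 : 0 < k :=
        Nat.pos_of_ne_zero (fun h0 => hm0 (by rw [← hkm, h0, Nat.mul_zero]))
      set g := fit f q with hgdef
      have hg0 : constantCoeff g = 0 := constantCoeff_fit hf0 q
      have hgint : ∀ j, ‖coeff j g‖ ≤ 1 := hfitint q
      have hg1 : coeff 1 g = lam ^ q := hfit1 q
      have hcomm : fcomp f g = fcomp g f := by
        have h1 : fit f (1 + q) = fcomp (fit f 1) (fit f q) := fit_add hf0 1 q
        have h2 : fit f (q + 1) = fcomp (fit f q) (fit f 1) := fit_add hf0 q 1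
        rw [fit_one] at h1 h2
        rw [hgdef, ← h1, ← h2, Nat.add_comm]
      have hb := lemma1 lam hlam q hq2' f g hf hf0 hf1 hgint hg0 hg1 hq1.le hcomm
      have he₀ : Sm θ δ (g - X) := by
        constructor
        · rw [map_sub, hg0, constantCoeff_X, sub_zero]
        intro i
        rcases Nat.eq_zero_or_pos i with rfl | hi
        · rw [pow_zero, mul_one, map_sub, hg1, coeff_X, if_pos rfl]
        have hcoe : coeff (i+1) (g - X) = coeff (i+1) g := by
          rw [map_sub, coeff_X, if_neg (by omega), sub_zero]
        rw [hcoe]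
        rcases Nat.lt_or_ge i q with hiq | hiq
        · have step : ‖coeff (i+1) g‖ * θ^i ≤ δ * 1 := by
            apply mul_le_mul (hb (i+1) (by omega) (by omega))
              (pow_le_one₀ hθpos.le hθlt1.le) (by positivity) hδpos.le
          calc ‖coeff (i+1) g‖ * θ^i ≤ δ * 1 := step
            _ = δ := mul_one δ
        · have step : ‖coeff (i+1) g‖ * θ^i ≤ 1 * θ^i :=
            mul_le_mul_of_nonneg_right (hgint (i+1)) (by positivity)
          calc ‖coeff (i+1) g‖ * θ^i ≤ 1 * θ^i := step
            _ = θ^i := one_mul _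
            _ ≤ θ^q := pow_le_pow_of_le_one hθpos.le hθlt1.le hiq
            _ = δ := hθq
      -- the composition operator T and Δ = T - 1
      set T : Module.End K (PowerSeries K) :=
        LinearMap.mk (AddHom.mk (fun w => fcomp w g) (fun w v => fcomp_add_left w v g))
          (fun c w => by simpa using fcomp_smul_left c w g) with hT
      have hTapp : ∀ u : PowerSeries K, T u = fcomp u g := fun _ => rfl
      haveI : CharP (Module.End K (PowerSeries K)) p :=
        charP_of_injective_algebraMap (algebraMap K (Module.End K (PowerSeries K))).injective p
      have hTpow : ∀ m : ℕ, (T ^ m) X = fit g m := by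
        intro m
        induction m with
        | zero => rw [pow_zero, Module.End.one_apply]; rfl
        | succ m ih =>
          rw [pow_succ', Module.End.mul_apply, ih, hTapp]
          have h2 : fit g (m+1) = fcomp (fit g m) (fit g 1) := fit_add hg0 m 1
          rw [fit_one] at h2
          rw [h2]
      have hfitq : ∀ m : ℕ, fit f (q * m) = fit g m := by
        intro m
        induction m with
        | zero => rw [Nat.mul_zero]; rfl
        | succ m ih =>
          have h1 : q * (m+1) = q*m + q := by ring
          rw [h1, fit_add hf0 (q*m) q, ih]
          have h2 : fit g (m+1) = fcomp (fit g m) (fit g 1) := fit_add hg0 m 1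
          rw [fit_one] at h2
          rw [h2, hgdef]
      have hbinom : T ^ (p^n) = 1 + (T - 1)^(p^n) := by
        have h := add_pow_char_pow_of_commute p n (Commute.one_left (T - 1))
        have h2 : (1 + (T - 1) : Module.End K (PowerSeries K)) = T := by abel
        rw [h2] at h
        rw [h, one_pow]
      have hTk : T ^ (p^n * k) = ∑ s ∈ Finset.range (k+1),
          ((T-1)^(p^n))^s * ((k.choose s : ℕ) : Module.End K (PowerSeries K)) := by
        rw [pow_mul, hbinom]
        have hc : Commute ((T-1)^(p^n)) (1 : Module.End K (PowerSeries K)) :=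
          Commute.one_right _
        calc (1 + (T-1)^(p^n))^k = ((T-1)^(p^n) + 1)^k := by rw [add_comm]
          _ = ∑ s ∈ Finset.range (k+1), ((T-1)^(p^n))^s * 1^(k-s) * ((k.choose s : ℕ) : Module.End K (PowerSeries K)) := hc.add_pow k
          _ = ∑ s ∈ Finset.range (k+1), ((T-1)^(p^n))^s * ((k.choose s : ℕ) : Module.End K (PowerSeries K)) := by
              apply Finset.sum_congr rfl
              intro s hs
              rw [one_pow, mul_one]
      have hfitl : fit f (q * m0) = ∑ s ∈ Finset.range (k+1),
          (k.choose s) • (((T-1)^(p^n * s)) X) := by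
        rw [show q * m0 = q * (p^n * k) by rw [hkm], hfitq, ← hTpow, hTk,
          LinearMap.sum_apply]
        apply Finset.sum_congr rfl
        intro s hs
        rw [Module.End.mul_apply, Module.End.natCast_apply, map_nsmul, pow_mul]
      have hWsum : W = ∑ s ∈ Finset.range k, ((k.choose (s+1)) • (((T-1)^(p^n * (s+1))) X)) := by
        rw [hWdef, hfitl, Finset.sum_range_succ']
        have h0 : (k.choose 0) • (((T-1)^(p^n * 0)) X) = X := by
          rw [Nat.mul_zero, pow_zero, Module.End.one_apply, Nat.choose_zero_right, one_smul]
        rw [h0, add_sub_cancel_right]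
      have hDX : ∀ j : ℕ, 1 ≤ j → Sm θ (δ^j) (((T-1)^j) X) := by
        intro j
        induction j with
        | zero => omega
        | succ j ih =>
          intro _
          rcases Nat.eq_zero_or_pos j with rfl | hj
          · rw [pow_one, pow_one]
            have hone : ((T - 1) : Module.End K (PowerSeries K)) X = g - X := by
              rw [LinearMap.sub_apply, Module.End.one_apply, hTapp, fcomp_X_left g hg0]
            rw [hone]
            exact he₀
          · have hstep : ((T-1)^(j+1)) X
                = fcomp (((T-1)^j) X) (X + (g - X)) - ((T-1)^j) X := by
              rw [pow_succ', Module.End.mul_apply, LinearMap.sub_apply, Module.End.one_apply,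
                hTapp]
              congr 2
              ring
            rw [hstep, pow_succ]
            exact Sm.delta hθpos hθlt1.le (pow_nonneg hδpos.le j) hδpos.le hδ1.le (ih hj) he₀
      have hWSm : Sm θ (δ^(p^n)) W := by
        rw [hWsum]
        apply Sm.sum _ _ hθpos.le (by positivity)
        intro s hs
        apply Sm.nsmul hθpos.le _ (by positivity)
        apply (hDX (p^n * (s+1)) (Nat.mul_pos (pow_pos hp.pos n) (by omega))).mono
        apply pow_le_pow_of_le_one hδpos.le hδ1.le
        calc p^n = p^n * 1 := (Nat.mul_one _).symm
          _ ≤ p^n * (s+1) := Nat.mul_le_mul_left _ (by omega)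
      have hnormW1 : ‖coeff 1 W‖ = δ^(p^n) := by
        rw [hW1]
        have h1 : lam ^ (q * m0) = (lam ^ (q*k)) ^ (p^n) := by
          rw [← pow_mul]
          congr 1
          rw [← hkm]; ring
        have h2 : lam ^ (q*m0) - 1 = (lam^(q*k) - 1)^(p^n) := by
          rw [h1, sub_pow_char_pow, one_pow]
        rw [h2, norm_pow]
        congr 1
        -- ‖λ^{qk} − 1‖ = δ
        have hgeom : (∑ i ∈ Finset.range k, (lam^q)^i) * (lam^q - 1) = lam^(q*k) - 1 := by
          rw [geom_sum_mul, pow_mul]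
        have hSnear : ‖(∑ i ∈ Finset.range k, (lam^q)^i) - (k:K)‖ ≤ δ := by
          have hsub : (∑ i ∈ Finset.range k, (lam^q)^i) - (k:K)
              = ∑ i ∈ Finset.range k, ((lam^q)^i - 1) := by
            rw [Finset.sum_sub_distrib, Finset.sum_const, Finset.card_range, nsmul_eq_mul,
              mul_one]
          rw [hsub]
          exact norm_sum_le' hδpos.le (fun i _ => norm_pow_q_sub_one_le hlam i)
        have hk1 : ‖(k:K)‖ = 1 := norm_natCast_eq_one hp hpk
        have hS1 : ‖∑ i ∈ Finset.range k, (lam^q)^i‖ = 1 := by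
          have hle : ‖∑ i ∈ Finset.range k, (lam^q)^i‖ ≤ 1 := by
            have : (∑ i ∈ Finset.range k, (lam^q)^i)
                = ((∑ i ∈ Finset.range k, (lam^q)^i) - (k:K)) + (k:K) := by ring
            rw [this]
            calc ‖((∑ i ∈ Finset.range k, (lam^q)^i) - (k:K)) + (k:K)‖
                ≤ max ‖(∑ i ∈ Finset.range k, (lam^q)^i) - (k:K)‖ ‖(k:K)‖ := norm_add_le_max _ _
              _ ≤ 1 := max_le (hSnear.trans hδ1.le) hk1.le
          have hge : 1 ≤ ‖∑ i ∈ Finset.range k, (lam^q)^i‖ := by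
            by_contra hcontr
            push_neg at hcontr
            have heq : (k:K) = ((k:K) - (∑ i ∈ Finset.range k, (lam^q)^i))
                + (∑ i ∈ Finset.range k, (lam^q)^i) := by ring
            have : (1:ℝ) ≤ max ‖(k:K) - (∑ i ∈ Finset.range k, (lam^q)^i)‖
                ‖∑ i ∈ Finset.range k, (lam^q)^i‖ := by
              rw [← hk1]
              conv_lhs => rw [heq]
              exact norm_add_le_max _ _
            rw [← norm_neg, neg_sub] at this
            rcases le_max_iff.mp this with h | h
            · have := hSnear.trans hδ1.le
              linarith [hSnear, hδ1]
            · linarith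
          linarith
        rw [← hgeom, norm_mul, hS1, one_mul]
      -- apply the Newton contradiction
      apply newton hW0 (C := δ^(p^n) * ρ^2 / θ) (by positivity) ?_ ?_ hsum'
      · rw [pow_one, norm_mul, hnormW1]
        rw [div_lt_iff₀ hθpos]
        calc δ^(p^n) * ρ^2 = (δ^(p^n) * ρ) * ρ := by ring
          _ < (δ^(p^n) * ρ) * θ := by
            apply mul_lt_mul_of_pos_left hcon (by positivity)
      · intro m hm
        obtain ⟨i, rfl⟩ : ∃ i, m = i + 1 := ⟨m - 1, by omega⟩
        have hi1 : 1 ≤ i := by omega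
        rw [norm_mul, norm_pow]
        have h1 : ‖coeff (i+1) W‖ * θ^i ≤ δ^(p^n) := hWSm.2 i
        have hρθ : ρ/θ ≤ 1 := by
          rw [div_le_one hθpos]
          exact hcon.le
        have e1 : ρ^(i+1) = θ^i * ((ρ/θ)^i * ρ) := by
          rw [div_pow, pow_succ]
          field_simp
        calc ‖coeff (i+1) W‖ * ρ^(i+1)
            = (‖coeff (i+1) W‖ * θ^i) * ((ρ/θ)^i * ρ) := by rw [e1]; ring
          _ ≤ δ^(p^n) * ((ρ/θ)^i * ρ) := by
              apply mul_le_mul_of_nonneg_right h1 (by positivity)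
          _ ≤ δ^(p^n) * ((ρ/θ) * ρ) := by
              have : (ρ/θ)^i ≤ (ρ/θ)^1 := pow_le_pow_of_le_one (by positivity) hρθ hi1
              rw [pow_one] at this
              apply mul_le_mul_of_nonneg_left _ (by positivity)
              apply mul_le_mul_of_nonneg_right this hρpos.le
          _ = δ^(p^n) * ρ^2 / θ := by ring
    · -- easy case: the multiplier is a unit
      have hnorm1 : ‖lam ^ ℓ - 1‖ = 1 :=
        norm_pow_sub_one_eq_one hlam hq1 hq2' hq0 hqdvd
      apply newton hW0 (mul_self_nonneg ρ) (C := ρ * ρ) _ _ hsum'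
      · rw [hW1, norm_mul, hnorm1, one_mul, pow_one]
        calc ρ * ρ < 1 * ρ := by nlinarith
          _ = ρ := one_mul ρ
      · intro m hm
        rw [hWm m (by omega), norm_mul, norm_pow]
        calc ‖coeff m (fit f ℓ)‖ * ρ ^ m ≤ 1 * ρ ^ m := by
              apply mul_le_mul_of_nonneg_right (hfitint ℓ m) (by positivity)
          _ = ρ ^ m := one_mul _
          _ ≤ ρ ^ 2 := pow_le_pow_of_le_one hρpos.le hz1.le hm
          _ = ρ * ρ := sq ρ
  constructor
  · exact ⟨θ, hθpos, key⟩
  · intro z₀ h1 h2 h3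
    exact Or.inr (key z₀ h1 h2 h3)
end
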